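/- arXiv:2010.09069 — 5 statements merged into one kernel-verified Lean document; each statement's English description precedes it below -/
import Mathlib

section
/- Let α ∈ (0,1) be irrational with continued fraction expansion α = [0; a₁, a₂, …] satisfying a_k ≥ 64 for all k ≥ 1, let p_k/q_k be its convergents, and set D_k = q_k α − p_k. Let (b_k)_{k≥1} be positive integers with a_k/4 ≤ b_k ≤ a_k/2 for all k ≥ 1, and let γ = ∑_{k≥0} b_{k+1} D_k. Then 0 < α < 1/64, 0 ≤ γ < 1 − α, and ‖nα − γ‖ ≠ 0 for every n ∈ ℕ. -/
open MeasureTheory Filter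

/-- distance from `x` to the nearest integer. -/
noncomputable def nint (x : ℝ) : ℝ := |x - round x|

/-- the `t`-th partial quotient of the continued fraction expansion of `γ`
(junk value `0` if the expansion has terminated before index `t`). -/
noncomputable def cfa (γ : ℝ) (t : ℕ) : ℤ :=
  match GenContFract.IntFractPair.stream γ t with
  | some p => p.b
  | none => 0

/-- numerator `p_t` of the `t`-th continued fraction convergent of `γ`. -/
noncomputable def cfp (γ : ℝ) : ℕ → ℤ
  | 0 => cfa γ 0
  | 1 => cfa γ 1 * cfa γ 0 + 1
  | (n + 2) => cfa γ (n + 2) * cfp γ (n + 1) + cfp γ n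

/-- denominator `q_t` of the `t`-th continued fraction convergent of `γ`. -/
noncomputable def cfq (γ : ℝ) : ℕ → ℤ
  | 0 => 1
  | 1 => cfa γ 1
  | (n + 2) => cfa γ (n + 2) * cfq γ (n + 1) + cfq γ n

set_option linter.unusedSectionVars false

namespace DandyAux

theorem cfp_zero' (α : ℝ) : cfp α 0 = cfa α 0 := rfl
theorem cfp_one (α : ℝ) : cfp α 1 = cfa α 1 * cfa α 0 + 1 := rfl
theorem cfq_zero' (α : ℝ) : cfq α 0 = 1 := rfl
theorem cfq_one (α : ℝ) : cfq α 1 = cfa α 1 := rfl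
theorem cfp_two (α : ℝ) (n : ℕ) :
    cfp α (n+2) = cfa α (n + 2) * cfp α (n + 1) + cfp α n := rfl
theorem cfq_two (α : ℝ) (n : ℕ) :
    cfq α (n+2) = cfa α (n + 2) * cfq α (n + 1) + cfq α n := rfl

/-- the sequence of fractional parts of the continued fraction algorithm -/
noncomputable def ff (α : ℝ) : ℕ → ℝ
  | 0 => Int.fract α
  | (k+1) => Int.fract (ff α k)⁻¹

theorem irr_fract {x : ℝ} (h : Irrational x) : Irrational (Int.fract x) := by
  rw [Int.fract]; exact h.sub_intCast _

theorem stream_eq {α : ℝ} (hirr : Irrational α) (k : ℕ) :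
    GenContFract.IntFractPair.stream α k = some ⟨cfa α k, ff α k⟩ ∧ Irrational (ff α k) := by
  induction k with
  | zero =>
    refine ⟨?_, irr_fract hirr⟩
    rw [GenContFract.IntFractPair.stream_zero]
    have : cfa α 0 = ⌊α⌋ := by
      simp [cfa, GenContFract.IntFractPair.stream_zero, GenContFract.IntFractPair.of]
    rw [this]; rfl
  | succ k ih =>
    obtain ⟨hs, hi⟩ := ih
    have h1 : GenContFract.IntFractPair.stream α (k+1)
        = some (GenContFract.IntFractPair.of (ff α k)⁻¹) :=
      GenContFract.IntFractPair.stream_succ_of_some hs hi.ne_zero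
    have h2 : cfa α (k+1) = ⌊(ff α k)⁻¹⌋ := by simp [cfa, h1, GenContFract.IntFractPair.of]
    refine ⟨?_, irr_fract hi.inv⟩
    rw [h1, h2]; rfl

theorem cfa_succ {α : ℝ} (hirr : Irrational α) (k : ℕ) :
    cfa α (k + 1) = ⌊(ff α k)⁻¹⌋ := by
  have h1 : GenContFract.IntFractPair.stream α (k+1)
      = some (GenContFract.IntFractPair.of (ff α k)⁻¹) :=
    GenContFract.IntFractPair.stream_succ_of_some (stream_eq hirr k).1 (stream_eq hirr k).2.ne_zero
  simp [cfa, h1, GenContFract.IntFractPair.of]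

theorem ff_key {α : ℝ} (hirr : Irrational α) (k : ℕ) :
    (ff α k)⁻¹ = (cfa α (k + 1) : ℝ) + ff α (k + 1) := by
  rw [cfa_succ hirr k, show ff α (k+1) = Int.fract (ff α k)⁻¹ from rfl]
  rw [Int.fract]; ring

theorem ff_pos {α : ℝ} (hα : α ∈ Set.Ioo (0:ℝ) 1) (hirr : Irrational α) (k : ℕ) :
    0 < ff α k ∧ ff α k < 1 := by
  cases k with
  | zero =>
    have : ff α 0 = α := Int.fract_eq_self.mpr ⟨hα.1.le, hα.2⟩
    rw [this]; exact ⟨hα.1, hα.2⟩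
  | succ k =>
    have h := (stream_eq hirr (k+1)).2
    exact ⟨lt_of_le_of_ne (Int.fract_nonneg _) (Ne.symm h.ne_zero),
      Int.fract_lt_one _⟩

theorem ff_zero {α : ℝ} (hα : α ∈ Set.Ioo (0:ℝ) 1) : ff α 0 = α :=
  Int.fract_eq_self.mpr ⟨hα.1.le, hα.2⟩

theorem cfa_zero {α : ℝ} (hα : α ∈ Set.Ioo (0:ℝ) 1) : cfa α 0 = 0 := by
  have : cfa α 0 = ⌊α⌋ := by
    simp [cfa, GenContFract.IntFractPair.stream_zero, GenContFract.IntFractPair.of]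
  rw [this, Int.floor_eq_zero_iff]
  exact ⟨hα.1.le, hα.2⟩

/-- `D_k = q_k α - p_k` -/
noncomputable def D (α : ℝ) (k : ℕ) : ℝ := (cfq α k : ℝ) * α - (cfp α k : ℝ)

theorem D_def (α : ℝ) (k : ℕ) : D α k = (cfq α k : ℝ) * α - (cfp α k : ℝ) := rfl

noncomputable def A (α : ℝ) (k : ℕ) : ℝ := |D α k|

section
variable {α : ℝ} (hα : α ∈ Set.Ioo (0:ℝ) 1) (hirr : Irrational α)
include hα hirr

theorem haf (k : ℕ) : (cfa α (k+1) : ℝ) * ff α k < 1 := by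
  have h1 := ff_key hirr k
  have h2 := ff_pos hα hirr k
  have h3 := (ff_pos hα hirr (k+1)).1
  have : (cfa α (k+1) : ℝ) < (ff α k)⁻¹ := by rw [h1]; linarith
  calc (cfa α (k+1) : ℝ) * ff α k < (ff α k)⁻¹ * ff α k :=
        mul_lt_mul_of_pos_right this h2.1
    _ = 1 := inv_mul_cancel₀ h2.1.ne'

theorem D_zero : D α 0 = α := by
  simp [D, cfq_zero', cfp_zero', cfa_zero hα]

theorem D_succ : ∀ k : ℕ, D α (k + 1) = -(ff α (k + 1)) * D α k := by
  have hff := ff_pos hα hirr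
  have base : D α 1 = -(ff α 1) * D α 0 := by
    have h1 := ff_key hirr 0
    rw [ff_zero hα] at h1
    have hα0 : α ≠ 0 := hα.1.ne'
    have h2 : 1 = (cfa α 1 : ℝ) * α + ff α 1 * α := by
      field_simp at h1
      linarith [h1]
    rw [D_zero hα hirr]
    simp only [D, cfq_one, cfp_one, cfa_zero hα]
    push_cast
    linarith [h2]
  intro k
  induction k with
  | zero => exact base
  | succ k ih =>
    have hfne : ff α (k+1) ≠ 0 := (hff (k+1)).1.ne'
    have hkey := ff_key hirr (k+1)
    have hrec : D α (k+2) = (cfa α (k+2) : ℝ) * D α (k+1) + D α k := by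
      simp only [D, cfp_two, cfq_two]; push_cast; ring
    have hDk : D α k = -(D α (k+1)) / ff α (k+1) := by
      rw [ih]; field_simp
    rw [hrec, hDk]
    have : (cfa α (k+2) : ℝ) = (ff α (k+1))⁻¹ - ff α (k+2) := by rw [hkey]; ring
    rw [this]
    field_simp
    ring

theorem A_pos (k : ℕ) : 0 < A α k := by
  induction k with
  | zero => rw [A, D_zero hα hirr, abs_of_pos hα.1]; exact hα.1
  | succ k ih =>
    rw [A, D_succ hα hirr k, abs_mul, abs_neg, abs_of_pos (ff_pos hα hirr (k+1)).1]
    exact mul_pos (ff_pos hα hirr (k+1)).1 ih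

theorem A_succ (k : ℕ) : A α (k+1) = ff α (k+1) * A α k := by
  rw [A, A, D_succ hα hirr k, abs_mul, abs_neg, abs_of_pos (ff_pos hα hirr (k+1)).1]

theorem A_zero : A α 0 = α := by rw [A, D_zero hα hirr, abs_of_pos hα.1]

theorem A_le (k : ℕ) : A α k ≤ α := by
  induction k with
  | zero => rw [A_zero hα hirr]
  | succ k ih =>
    rw [A_succ hα hirr k]
    have h1 := ff_pos hα hirr (k+1)
    have h2 := A_pos hα hirr k
    nlinarith

theorem D_ne (k : ℕ) : D α k ≠ 0 := by
  have := A_pos hα hirr k; rw [A] at this; exact abs_pos.mp this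

theorem DD_neg (k : ℕ) : D α k * D α (k+1) < 0 := by
  have h1 := (ff_pos hα hirr (k+1)).1
  have h2 := D_ne hα hirr k
  have h3 : D α k * D α (k+1) = -(ff α (k+1) * (D α k * D α k)) := by
    rw [D_succ hα hirr k]; ring
  have h4 := mul_pos h1 (mul_self_pos.mpr h2)
  linarith

theorem haA (k : ℕ) : (cfa α (k+2) : ℝ) * A α (k+1) < A α k := by
  have h1 := haf hα hirr (k+1)
  have h2 := A_pos hα hirr k
  have h3 := (ff_pos hα hirr (k+1)).1
  rw [A_succ hα hirr k]
  calc (cfa α (k+2) : ℝ) * (ff α (k+1) * A α k)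
      = ((cfa α (k+2) : ℝ) * ff α (k+1)) * A α k := by ring
    _ < 1 * A α k := mul_lt_mul_of_pos_right h1 h2
    _ = A α k := one_mul _

end

/-- the terms of the series defining `γ` -/
noncomputable def tt (α : ℝ) (b : ℕ → ℤ) (k : ℕ) : ℝ := (b (k+1) : ℝ) * D α k

section
variable {α : ℝ} (hα : α ∈ Set.Ioo (0:ℝ) 1) (hirr : Irrational α)
    (ha : ∀ k : ℕ, 1 ≤ k → (64 : ℤ) ≤ cfa α k)
    {b : ℕ → ℤ} (hbpos : ∀ k : ℕ, 1 ≤ k → 0 < b k)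
    (hb : ∀ k : ℕ, 1 ≤ k →
      (cfa α k : ℝ) / 4 ≤ (b k : ℝ) ∧ (b k : ℝ) ≤ (cfa α k : ℝ) / 2)
include hα hirr ha hbpos hb

theorem tt_abs (k : ℕ) : |tt α b k| = (b (k+1) : ℝ) * A α k := by
  rw [tt, abs_mul, A, abs_of_pos]
  exact_mod_cast hbpos (k+1) (by omega)

theorem tt_lb (k : ℕ) : 16 * A α k ≤ |tt α b k| := by
  rw [tt_abs hα hirr ha hbpos hb k]
  have h1 := (hb (k+1) (by omega)).1
  have h2 : (64 : ℝ) ≤ (cfa α (k+1) : ℝ) := by exact_mod_cast ha (k+1) (by omega)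
  have := A_pos hα hirr k
  nlinarith

theorem tt_pos (k : ℕ) : 0 < |tt α b k| := by
  have := tt_lb hα hirr ha hbpos hb k
  have := A_pos hα hirr k
  linarith

theorem tt_ub (k : ℕ) : |tt α b k| ≤ (cfa α (k+1) : ℝ) / 2 * A α k := by
  rw [tt_abs hα hirr ha hbpos hb k]
  have h1 := (hb (k+1) (by omega)).2
  have := A_pos hα hirr k
  nlinarith

theorem tt_half (k : ℕ) : |tt α b (k+1)| < A α k / 2 := by
  have h1 := tt_ub hα hirr ha hbpos hb (k+1)
  have h2 := haA hα hirr k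
  have h3 := A_pos hα hirr (k+1)
  have h4 : (0:ℝ) < (cfa α (k+2) : ℝ) := by
    have : (64 : ℝ) ≤ (cfa α (k+2) : ℝ) := by exact_mod_cast ha (k+2) (by omega)
    linarith
  nlinarith

theorem tt_ratio (k : ℕ) : |tt α b (k+1)| ≤ |tt α b k| / 32 := by
  have h1 := tt_half hα hirr ha hbpos hb k
  have h2 := tt_lb hα hirr ha hbpos hb k
  linarith

theorem tt_geom (K j : ℕ) : |tt α b (j + K)| ≤ |tt α b K| * (1/32)^j := by
  induction j with
  | zero => simp
  | succ j ih =>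
    have h1 : (j + 1) + K = (j + K) + 1 := by omega
    rw [h1]
    have h2 := tt_ratio hα hirr ha hbpos hb (j + K)
    calc |tt α b ((j+K)+1)| ≤ |tt α b (j+K)| / 32 := h2
      _ ≤ (|tt α b K| * (1/32)^j) / 32 := by linarith
      _ = |tt α b K| * (1/32)^(j+1) := by ring

theorem tt_summable_abs (K : ℕ) : Summable (fun j => |tt α b (j + K)|) := by
  apply Summable.of_nonneg_of_le (fun j => abs_nonneg _)
    (fun j => tt_geom hα hirr ha hbpos hb K j)
  exact (summable_geometric_of_lt_one (by norm_num) (by norm_num)).mul_left _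

theorem tt_summable (K : ℕ) : Summable (fun j => tt α b (j + K)) :=
  (tt_summable_abs hα hirr ha hbpos hb K).of_abs

theorem tail_ub (K : ℕ) : |∑' j, tt α b (j + K)| ≤ |tt α b K| * (32/31) := by
  have h1 : |∑' j, tt α b (j + K)| ≤ ∑' j, |tt α b (j + K)| := by
    simpa [Real.norm_eq_abs] using
      norm_tsum_le_tsum_norm (f := fun j => tt α b (j + K))
        (by simpa [Real.norm_eq_abs] using tt_summable_abs hα hirr ha hbpos hb K)
  have h2 : ∑' j, |tt α b (j + K)| ≤ ∑' j : ℕ, |tt α b K| * (1/32)^j := by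
    apply Summable.tsum_le_tsum (tt_geom hα hirr ha hbpos hb K)
      (tt_summable_abs hα hirr ha hbpos hb K)
    exact (summable_geometric_of_lt_one (by norm_num) (by norm_num)).mul_left _
  have h3 : ∑' j : ℕ, |tt α b K| * (1/32:ℝ)^j = |tt α b K| * (32/31) := by
    rw [tsum_mul_left, tsum_geometric_of_lt_one (by norm_num) (by norm_num)]
    norm_num
  linarith

theorem tail_split (K : ℕ) :
    ∑' j, tt α b (j + K) = tt α b K + ∑' j, tt α b (j + (K+1)) := by
  rw [Summable.tsum_eq_zero_add (tt_summable hα hirr ha hbpos hb K)]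
  simp only [Nat.zero_add]
  congr 1
  apply tsum_congr
  intro j
  congr 1
  omega

theorem tail_lb (K : ℕ) : (30/31) * |tt α b K| ≤ |∑' j, tt α b (j + K)| := by
  have h1 := tail_split hα hirr ha hbpos hb K
  have h2 := tail_ub hα hirr ha hbpos hb (K+1)
  have h3 := tt_ratio hα hirr ha hbpos hb K
  have h4 : |tt α b K| - |∑' j, tt α b (j + (K+1))| ≤ |∑' j, tt α b (j + K)| := by
    rw [h1]
    have := abs_add_le (tt α b K + ∑' j, tt α b (j + (K+1))) (-(∑' j, tt α b (j + (K+1))))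
    simp only [add_neg_cancel_right, abs_neg] at this
    linarith
  linarith

end

section
variable {α : ℝ} (hα : α ∈ Set.Ioo (0:ℝ) 1) (hirr : Irrational α)
    (ha : ∀ k : ℕ, 1 ≤ k → (64 : ℤ) ≤ cfa α k)
include hα hirr ha

theorem hdet (k : ℕ) :
    cfp α (k+1) * cfq α k - cfp α k * cfq α (k+1) = (-1)^k := by
  induction k with
  | zero => rw [cfp_one, cfq_zero', cfp_zero', cfq_one]; ring
  | succ k ih =>
    rw [cfp_two, cfq_two]
    rw [show (cfa α (k + 2) * cfp α (k + 1) + cfp α k) * cfq α (k+1)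
        - cfp α (k+1) * (cfa α (k + 2) * cfq α (k + 1) + cfq α k)
        = -(cfp α (k+1) * cfq α k - cfp α k * cfq α (k+1)) by ring, ih]
    ring

theorem hq_facts (k : ℕ) :
    (1 ≤ cfq α k ∧ (k:ℤ) + 1 ≤ cfq α k) ∧
      (1 ≤ cfq α (k+1) ∧ (k:ℤ) + 2 ≤ cfq α (k+1)) := by
  induction k with
  | zero =>
    have h1 := ha 1 (by omega)
    refine ⟨⟨by rw [cfq_zero'], by rw [cfq_zero']; norm_num⟩, ⟨?_, ?_⟩⟩ <;>
      rw [cfq_one] <;> omega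
  | succ k ih =>
    obtain ⟨h0, h1⟩ := ih
    have ha2 := ha (k+2) (by omega)
    refine ⟨h1, ?_, ?_⟩ <;> {
      rw [cfq_two]
      push_cast
      nlinarith [h0.1, h1.1, h0.2, h1.2] }

theorem hq_mono (k : ℕ) : cfq α k ≤ cfq α (k+1) := by
  cases k with
  | zero =>
    rw [cfq_zero', cfq_one]; have := ha 1 (by omega); omega
  | succ k =>
    rw [cfq_two]
    have h1 := (hq_facts hα hirr ha k).1.1
    have h2 := (hq_facts hα hirr ha k).2.1
    have ha2 := ha (k+2) (by omega)
    nlinarith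

/-- best approximation property -/
theorem best (J : ℕ) (N M : ℤ) (hN : N ≠ 0) (hNlt : |N| < cfq α (J+1)) :
    A α J ≤ |(N : ℝ) * α - (M : ℝ)| := by
  obtain ⟨e, he⟩ : ∃ e : ℤ, e = (-1)^J := ⟨_, rfl⟩
  have hsq : e * e = 1 := by
    rw [he, ← pow_add]
    exact Even.neg_one_pow ⟨J, rfl⟩
  have hd : cfp α (J+1) * cfq α J - cfp α J * cfq α (J+1) = e := by
    rw [he]; exact hdet hα hirr ha J
  set x : ℤ := e * (N * cfp α (J+1) - M * cfq α (J+1)) with hxdef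
  set y : ℤ := e * (M * cfq α J - N * cfp α J) with hydef
  have hx : x * cfq α J + y * cfq α (J+1) = N := by
    rw [hxdef, hydef]
    linear_combination (e * N) * hd + N * hsq
  have hy : x * cfp α J + y * cfp α (J+1) = M := by
    rw [hxdef, hydef]
    linear_combination (e * M) * hd + M * hsq
  have hcomb : (N : ℝ) * α - (M : ℝ) = (x : ℝ) * D α J + (y : ℝ) * D α (J+1) := by
    rw [D_def, D_def]
    have hx' : (x:ℝ) * (cfq α J : ℝ) + (y:ℝ) * (cfq α (J+1) : ℝ) = (N : ℝ) := by
      exact_mod_cast congrArg (fun z : ℤ => (z : ℝ)) hx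
    have hy' : (x:ℝ) * (cfp α J : ℝ) + (y:ℝ) * (cfp α (J+1) : ℝ) = (M : ℝ) := by
      exact_mod_cast congrArg (fun z : ℤ => (z : ℝ)) hy
    linear_combination hy' - α * hx'
  have hqJ := (hq_facts hα hirr ha J).1.1
  have hqJ1 := (hq_facts hα hirr ha J).2.1
  rcases eq_or_ne x 0 with hx0 | hx0
  · exfalso
    rw [hx0, zero_mul, zero_add] at hx
    rcases eq_or_ne y 0 with hy0 | hy0
    · rw [hy0, zero_mul] at hx; exact hN hx.symm
    · have : cfq α (J+1) ≤ |N| := by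
        rw [← hx, abs_mul, abs_of_pos (by omega : (0:ℤ) < cfq α (J+1))]
        nlinarith [abs_pos.mpr hy0, abs_nonneg y]
      omega
  · have hxabs : (1:ℝ) ≤ |(x:ℝ)| := by
      have : (1:ℤ) ≤ |x| := abs_pos.mpr hx0
      exact_mod_cast this
    have hAJ := A_pos hα hirr J
    rcases eq_or_ne y 0 with hy0 | hy0
    · rw [hcomb, hy0]
      push_cast
      rw [zero_mul, add_zero, abs_mul]
      calc A α J = 1 * A α J := (one_mul _).symm
        _ ≤ |(x:ℝ)| * A α J := mul_le_mul_of_nonneg_right hxabs hAJ.le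
        _ = |(x:ℝ)| * |D α J| := rfl
    · have hxy : x * y < 0 := by
        rcases lt_or_gt_of_ne hx0 with hxneg | hxpos <;>
          rcases lt_or_gt_of_ne hy0 with hyneg | hypos
        · exfalso
          have e1 : x * cfq α J ≤ -cfq α J := by nlinarith
          have e2 : y * cfq α (J+1) ≤ -cfq α (J+1) := by nlinarith
          have : N ≤ -cfq α J - cfq α (J+1) := by omega
          have := abs_lt.mp hNlt
          omega
        · exact mul_neg_of_neg_of_pos hxneg hypos
        · exact mul_neg_of_pos_of_neg hxpos hyneg
        · exfalso
          have e1 : cfq α J ≤ x * cfq α J := by nlinarith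
          have e2 : cfq α (J+1) ≤ y * cfq α (J+1) := by nlinarith
          have : cfq α J + cfq α (J+1) ≤ N := by omega
          have := abs_lt.mp hNlt
          omega
      have hDD := DD_neg hα hirr J
      have hsame : 0 < ((x:ℝ) * D α J) * ((y:ℝ) * D α (J+1)) := by
        have hxyR : ((x:ℝ) * y) < 0 := by exact_mod_cast hxy
        nlinarith
      have habs : |(x:ℝ) * D α J| ≤ |(x:ℝ) * D α J + (y:ℝ) * D α (J+1)| := by
        set u := (x:ℝ) * D α J with hu
        set v := (y:ℝ) * D α (J+1) with hv
        rcases lt_trichotomy u 0 with hul | hul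
        · have hvl : v < 0 := by nlinarith
          rw [abs_of_neg hul, abs_of_neg (by linarith : u + v < 0)]
          linarith
        · rcases hul with hul | hul
          · exfalso; rw [hul, zero_mul] at hsame; exact lt_irrefl 0 hsame
          · have hvl : 0 < v := by nlinarith
            rw [abs_of_pos hul, abs_of_pos (by linarith : 0 < u + v)]
            linarith
      rw [hcomb]
      calc A α J = 1 * A α J := (one_mul _).symm
        _ ≤ |(x:ℝ)| * A α J := mul_le_mul_of_nonneg_right hxabs hAJ.le
        _ = |(x:ℝ) * D α J| := by rw [abs_mul]; rfl
        _ ≤ _ := habs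

end

section
variable {α : ℝ} (hα : α ∈ Set.Ioo (0:ℝ) 1) (hirr : Irrational α)
    (ha : ∀ k : ℕ, 1 ≤ k → (64 : ℤ) ≤ cfa α k)
    {b : ℕ → ℤ} (hbpos : ∀ k : ℕ, 1 ≤ k → 0 < b k)
    (hb : ∀ k : ℕ, 1 ≤ k →
      (cfa α k : ℝ) / 4 ≤ (b k : ℝ) ∧ (b k : ℝ) ≤ (cfa α k : ℝ) / 2)
include hα hirr ha hbpos hb

theorem Spartial (K : ℕ) :
    ∑ k ∈ Finset.range K, tt α b k
      = ((∑ k ∈ Finset.range K, b (k+1) * cfq α k : ℤ) : ℝ) * α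
        - ((∑ k ∈ Finset.range K, b (k+1) * cfp α k : ℤ) : ℝ) := by
  induction K with
  | zero => simp
  | succ K ih =>
    rw [Finset.sum_range_succ, ih, Finset.sum_range_succ, Finset.sum_range_succ]
    rw [tt, D_def]
    push_cast
    ring

theorem hb2 (k : ℕ) (hk : 1 ≤ k) : 2 * b k ≤ cfa α k := by
  have h := (hb k hk).2
  have : (2 * b k : ℝ) ≤ (cfa α k : ℝ) := by linarith
  exact_mod_cast this

theorem Sbound (K : ℕ) :
    2 * ∑ k ∈ Finset.range (K+1), b (k+1) * cfq α k ≤ cfq α (K+1) + cfq α K - 1 := by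
  induction K with
  | zero =>
    have h := hb2 hα hirr ha hbpos hb 1 (by omega)
    simp only [zero_add, Finset.sum_range_one, cfq_one, cfq_zero', mul_one]
    omega
  | succ K ih =>
    rw [Finset.sum_range_succ]
    have h1 := hb2 hα hirr ha hbpos hb (K+2) (by omega)
    have h2 := (hq_facts hα hirr ha K).2.1
    rw [cfq_two]
    nlinarith

theorem Spos (K : ℕ) : 0 ≤ ∑ k ∈ Finset.range K, b (k+1) * cfq α k := by
  apply Finset.sum_nonneg
  intro k _
  have := hbpos (k+1) (by omega)
  have := (hq_facts hα hirr ha k).1.1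
  positivity

theorem Slt (K : ℕ) : ∑ k ∈ Finset.range (K+1), b (k+1) * cfq α k < cfq α (K+1) := by
  have h1 := Sbound hα hirr ha hbpos hb K
  have h2 := hq_mono hα hirr ha K
  omega

end
end DandyAux

open DandyAux in
/-- Let `α ∈ (0,1)` be irrational with partial quotients `a_k = cfa α k ≥ 64`
for `k ≥ 1`, let `D_k = q_k α - p_k`, let `(b_k)` be positive integers with
`a_k/4 ≤ b_k ≤ a_k/2`, and let `γ = ∑_{k≥0} b_{k+1} D_k`.
Then `0 < α < 1/64`, `0 ≤ γ < 1 - α`, and `‖n α - γ‖ ≠ 0` for all `n ∈ ℕ`. -/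
theorem dandy_andy_setup
    (α : ℝ) (hαmem : α ∈ Set.Ioo (0 : ℝ) 1) (hirr : Irrational α)
    (ha : ∀ k : ℕ, 1 ≤ k → (64 : ℤ) ≤ cfa α k)
    (b : ℕ → ℤ) (hbpos : ∀ k : ℕ, 1 ≤ k → 0 < b k)
    (hb : ∀ k : ℕ, 1 ≤ k →
      (cfa α k : ℝ) / 4 ≤ (b k : ℝ) ∧ (b k : ℝ) ≤ (cfa α k : ℝ) / 2)
    (γ : ℝ)
    (hγ : γ = ∑' k : ℕ, (b (k + 1) : ℝ) * ((cfq α k : ℝ) * α - (cfp α k : ℝ))) :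
    0 < α ∧ α < 1 / 64 ∧ 0 ≤ γ ∧ γ < 1 - α ∧
      ∀ n : ℕ, 0 < n → nint ((n : ℝ) * α - γ) ≠ 0 := by
  have hγ' : γ = ∑' k : ℕ, tt α b k := hγ
  have halpha : α < 1 / 64 := by
    have h1 := haf hαmem hirr 0
    rw [ff_zero hαmem] at h1
    have h2 : (64 : ℝ) ≤ (cfa α 1 : ℝ) := by exact_mod_cast ha 1 (by omega)
    nlinarith [hαmem.1]
  -- γ as tail at 0
  have hsum : Summable (tt α b) := by
    have := tt_summable hαmem hirr ha hbpos hb 0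
    simpa using this
  have hγT : γ = ∑' j, tt α b (j + 0) := by
    rw [hγ']; apply tsum_congr; intro j; simp
  -- t0 facts
  have ht0 : tt α b 0 = (b 1 : ℝ) * α := by rw [tt, D_zero hαmem hirr]
  have ht0pos : 0 < tt α b 0 := by
    rw [ht0]
    have : (0:ℝ) < (b 1 : ℝ) := by exact_mod_cast hbpos 1 (by omega)
    exact mul_pos this hαmem.1
  have ht0half : |tt α b 0| < 1/2 := by
    have h1 := tt_ub hαmem hirr ha hbpos hb 0
    rw [A_zero hαmem hirr] at h1
    have h2 := haf hαmem hirr 0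
    rw [ff_zero hαmem] at h2
    have h3 : (0:ℝ) < (cfa α 1 : ℝ) := by
      have : (64 : ℝ) ≤ (cfa α 1 : ℝ) := by exact_mod_cast ha 1 (by omega)
      linarith
    nlinarith
  have hT1 : |∑' j, tt α b (j + 1)| ≤ |tt α b 0| / 31 := by
    have h1 := tail_ub hαmem hirr ha hbpos hb 1
    have h2 := tt_ratio hαmem hirr ha hbpos hb 0
    have h3 := abs_nonneg (tt α b 1)
    linarith
  have hγsplit : γ = tt α b 0 + ∑' j, tt α b (j + 1) := by
    rw [hγT, tail_split hαmem hirr ha hbpos hb 0]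
  have habs0 : |tt α b 0| = tt α b 0 := abs_of_pos ht0pos
  have hγpos : 0 ≤ γ := by
    rw [hγsplit]
    have := abs_le.mp hT1
    linarith
  have hγlt : γ < 1 - α := by
    rw [hγsplit]
    have := abs_le.mp hT1
    linarith
  refine ⟨hαmem.1, halpha, hγpos, hγlt, ?_⟩
  intro n hn hzero
  -- nα - γ is an integer m
  have hm : (n : ℝ) * α - γ = (round ((n : ℝ) * α - γ) : ℝ) := by
    rw [nint, abs_eq_zero, sub_eq_zero] at hzero
    exact hzero
  set m : ℤ := round ((n : ℝ) * α - γ) with hmdef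
  set K : ℕ := n with hKdef
  obtain ⟨J, hJ⟩ : ∃ J : ℕ, K = J + 1 := ⟨n - 1, by omega⟩
  set S : ℤ := ∑ k ∈ Finset.range K, b (k+1) * cfq α k with hSdef
  set P : ℤ := ∑ k ∈ Finset.range K, b (k+1) * cfp α k with hPdef
  set N : ℤ := (n : ℤ) - S with hNdef
  set M : ℤ := m - P with hMdef
  -- the tail at K equals N α - M
  have htail : ∑' j, tt α b (j + K) = (N : ℝ) * α - (M : ℝ) := by
    have h1 := Summable.sum_add_tsum_nat_add (f := tt α b) K hsum
    have h2 := Spartial hαmem hirr ha hbpos hb K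
    have h3 : γ = (n : ℝ) * α - (m : ℝ) := by linarith [hm]
    rw [← hγ'] at h1
    rw [hNdef, hMdef]
    push_cast
    rw [h2] at h1
    linarith [h1]
  -- tail bounds
  have htail_pos : 0 < |∑' j, tt α b (j + K)| := by
    have h1 := tail_lb hαmem hirr ha hbpos hb K
    have h2 := tt_pos hαmem hirr ha hbpos hb K
    linarith
  have htail_lt : |∑' j, tt α b (j + K)| < A α J := by
    have h1 := tail_ub hαmem hirr ha hbpos hb K
    have h2 : |tt α b K| < A α J / 2 := by
      rw [hJ]; exact tt_half hαmem hirr ha hbpos hb J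
    have h3 := A_pos hαmem hirr J
    have h4 := abs_nonneg (tt α b K)
    nlinarith
  rcases eq_or_ne N 0 with hN0 | hN0
  · -- tail = -M, a nonzero integer of absolute value < 1
    rw [hN0] at htail
    simp only [Int.cast_zero, zero_mul, zero_sub] at htail
    have h1 : |(M : ℝ)| < 1 := by
      rw [← abs_neg, ← htail]
      have h2 := A_le hαmem hirr J
      linarith [htail_lt, hαmem.2]
    have h2 : M ≠ 0 := by
      intro h
      rw [h] at htail
      simp only [Int.cast_zero, neg_zero] at htail
      rw [htail] at htail_pos
      simp at htail_pos
    have h3 : (1:ℤ) ≤ |M| := abs_pos.mpr h2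
    have h4 : (1:ℝ) ≤ |(M:ℝ)| := by exact_mod_cast h3
    linarith
  · -- best approximation contradiction
    have hSpos := Spos hαmem hirr ha hbpos hb K
    have hSlt : S < cfq α K := by
      rw [hSdef, hJ]; exact Slt hαmem hirr ha hbpos hb J
    have hnlt : (n : ℤ) < cfq α K := by
      have := (hq_facts hαmem hirr ha K).1.2
      omega
    have hNabs : |N| < cfq α (J+1) := by
      rw [← hJ, abs_lt]
      constructor <;> omega
    have hbest := best hαmem hirr ha J N M hN0 hNabs
    rw [← htail] at hbest
    linarith
end

section
/- Let d ∈ ℕ and let ψ : ℕ → ℝ_{>0} be non-increasing such that ∑_{n≥1} ψ(n)(log n)^d diverges. Then there exists a strictly increasing sequence (K_i)_{i≥1} of positive integers with K₁ = 1, K_i ≥ exp(exp i) for all i ≥ 2, and K_i = o(K_{i+1}), such that: (1) the function f defined by f(n) = i for K_i ≤ n < K_{i+1} satisfies f(n) ≪ log log n; and (2) the series ∑_{n≥1} ψ(4^{f(n)} n)(log n)^d diverges. -/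
open Filter Asymptotics

/-- `log x = max (ln x, 1)`. -/
noncomputable def plog (x : ℝ) : ℝ := max (Real.log x) 1


lemma one_le_plog (x : ℝ) : 1 ≤ plog x := le_max_right _ _

lemma plog_pos (x : ℝ) : 0 < plog x := lt_of_lt_of_le one_pos (one_le_plog x)

/-- decompose a stretched interval sum into blocks -/
lemma sum_Ico_mul_blocks (q : ℕ) (g : ℕ → ℝ) (a b : ℕ) (hab : a ≤ b) :
    ∑ m ∈ Finset.Ico (q * a) (q * b), g m
      = ∑ n ∈ Finset.Ico a b, ∑ m ∈ Finset.Ico (q * n) (q * (n + 1)), g m := by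
  induction b, hab using Nat.le_induction with
  | base => simp
  | succ b hab ih =>
      rw [Finset.sum_Ico_succ_top hab, ← ih,
        ← Finset.sum_Ico_consecutive g
          (Nat.mul_le_mul_left q hab) (Nat.mul_le_mul_left q (Nat.le_succ b))]

lemma exists_big_tail (g : ℕ → ℝ) (hg : ∀ n, 0 ≤ g n) (hdiv : ¬ Summable g)
    (N : ℕ) (C : ℝ) : ∃ M, N ≤ M ∧ C ≤ ∑ m ∈ Finset.Ico N M, g m := by
  have htend := (not_summable_iff_tendsto_nat_atTop_of_nonneg hg).1 hdiv
  have h1 : ∀ᶠ M in atTop, C + ∑ m ∈ Finset.range N, g m ≤ ∑ m ∈ Finset.range M, g m :=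
    htend.eventually_ge_atTop _
  obtain ⟨M, hMN, hM⟩ := (eventually_ge_atTop N).and h1 |>.exists
  refine ⟨M, hMN, ?_⟩
  have hsplit := Finset.sum_range_add_sum_Ico g hMN
  linarith

/-- Let `d ∈ ℕ` and `ψ : ℕ → ℝ_{>0}` be non-increasing with
`∑ ψ(n) (log n)^d = ∞`. Then there is a strictly increasing sequence `(K_i)_{i≥1}`
of positive integers with `K₁ = 1`, `K_i ≥ exp (exp i)` for `i ≥ 2`, and
`K_i = o(K_{i+1})`, such that the function `f` with `f(n) = i` for
`K_i ≤ n < K_{i+1}` satisfies `f(n) ≪ log log n` and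
`∑ ψ(4^{f(n)} n) (log n)^d = ∞`. -/
theorem divergence_transfer
    (d : ℕ) (hd : 0 < d) (ψ : ℕ → ℝ) (hψpos : ∀ n, 0 < ψ n) (hψanti : Antitone ψ)
    (hdiv : ¬ Summable fun n : ℕ => ψ n * plog n ^ d) :
    ∃ K : ℕ → ℕ, K 1 = 1 ∧
      (∀ i : ℕ, 1 ≤ i → 0 < K i) ∧
      (∀ i : ℕ, 1 ≤ i → K i < K (i + 1)) ∧
      (∀ i : ℕ, 2 ≤ i → Real.exp (Real.exp i) ≤ K i) ∧
      (fun i : ℕ => (K i : ℝ)) =o[atTop] (fun i : ℕ => (K (i + 1) : ℝ)) ∧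
      ∃ f : ℕ → ℕ,
        (∀ i : ℕ, 1 ≤ i → ∀ n : ℕ, K i ≤ n → n < K (i + 1) → f n = i) ∧
        (∃ C : ℝ, 0 < C ∧ ∀ n : ℕ, (f n : ℝ) ≤ C * plog (plog n)) ∧
        ¬ Summable (fun n : ℕ => ψ (4 ^ f n * n) * plog n ^ d) := by
  classical
  set g : ℕ → ℝ := fun n => ψ n * plog n ^ d with hgdef
  have hgpos : ∀ n, 0 < g n := fun n => mul_pos (hψpos n) (pow_pos (plog_pos _) d)
  have hg0 : ∀ n, 0 ≤ g n := fun n => (hgpos n).le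
  set L : ℕ → ℝ := fun i => 1 + ((i : ℝ) + 1) * Real.log 4 with hLdef
  have hlog4 : 0 < Real.log 4 := Real.log_pos (by norm_num)
  have hL1 : ∀ i, 1 ≤ L i := fun i => le_add_of_nonneg_right (by positivity)
  have hLpos : ∀ i, 0 < L i := fun i => lt_of_lt_of_le one_pos (hL1 i)
  set c : ℕ → ℝ := fun i => (4 ^ i : ℝ) * L i ^ d with hcdef
  have hcpos : ∀ i, 0 < c i := fun i => mul_pos (by positivity) (pow_pos (hLpos i) d)
  have hex : ∀ i k : ℕ, ∃ M : ℕ, k < M ∧ i * k + 1 ≤ M ∧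
      Real.exp (Real.exp ((i : ℝ) + 1)) ≤ (M : ℝ) ∧
      c i ≤ ∑ m ∈ Finset.Ico (4 ^ i * k) (4 ^ i * M), g m := by
    intro i k
    obtain ⟨M0, hM0N, hM0sum⟩ := exists_big_tail g hg0 hdiv (4 ^ i * k) (c i)
    refine ⟨max M0 (max (k + 1) (max (i * k + 1) (⌈Real.exp (Real.exp ((i : ℝ) + 1))⌉₊))),
      ?_, ?_, ?_, ?_⟩
    · exact lt_of_lt_of_le (Nat.lt_succ_self k)
        (le_trans (le_max_left _ _) (le_max_right _ _))
    · exact le_trans (le_trans (le_max_left _ _) (le_max_right _ _)) (le_max_right _ _)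
    · have h1 : ⌈Real.exp (Real.exp ((i : ℝ) + 1))⌉₊
          ≤ max M0 (max (k + 1) (max (i * k + 1) (⌈Real.exp (Real.exp ((i : ℝ) + 1))⌉₊))) :=
        le_trans (le_trans (le_max_right _ _) (le_max_right _ _)) (le_max_right _ _)
      exact le_trans (Nat.le_ceil _) (by exact_mod_cast h1)
    · refine le_trans hM0sum (Finset.sum_le_sum_of_subset_of_nonneg ?_ (fun n _ _ => hg0 n))
      apply Finset.Ico_subset_Ico_right
      calc M0 ≤ max M0 (max (k + 1) (max (i * k + 1) (⌈Real.exp (Real.exp ((i : ℝ) + 1))⌉₊)))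
            := le_max_left _ _
        _ = 1 * _ := (one_mul _).symm
        _ ≤ 4 ^ i * _ := Nat.mul_le_mul_right _ (Nat.one_le_pow _ _ (by norm_num))
  choose step hstep1 hstep2 hstep3 hstep4 using hex
  set K : ℕ → ℕ := fun i => Nat.rec 0 (fun j kj => if j = 0 then 1 else step j kj) i with hKdef
  have hK0 : K 0 = 0 := rfl
  have hK1 : K 1 = 1 := rfl
  have hKsucc : ∀ i, 1 ≤ i → K (i + 1) = step i (K i) := by
    intro i hi
    show (if i = 0 then 1 else step i (K i)) = step i (K i)
    rw [if_neg (by omega)]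
  have hKlt : ∀ i, 1 ≤ i → K i < K (i + 1) := fun i hi =>
    (hKsucc i hi) ▸ hstep1 i (K i)
  have hKpos : ∀ i, 1 ≤ i → 0 < K i := by
    intro i hi
    induction i, hi using Nat.le_induction with
    | base => rw [hK1]; norm_num
    | succ i hi ih => exact lt_trans ih (hKlt i hi)
  have hKmono : ∀ a b, 1 ≤ a → a ≤ b → K a ≤ K b := by
    intro a b ha hab
    induction b, hab using Nat.le_induction with
    | base => exact le_rfl
    | succ b hb ih => exact le_trans ih (hKlt b (le_trans ha hb)).le
  have hKgrow : ∀ i, 1 ≤ i → i * K i + 1 ≤ K (i + 1) := fun i hi =>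
    (hKsucc i hi) ▸ hstep2 i (K i)
  have hKexp : ∀ i : ℕ, 2 ≤ i → Real.exp (Real.exp i) ≤ K i := by
    intro i hi
    obtain ⟨j, rfl⟩ : ∃ j, i = j + 1 := ⟨i - 1, by omega⟩
    have hj : 1 ≤ j := by omega
    have h := hstep3 j (K j)
    rw [hKsucc j hj]
    push_cast
    exact h
  have ho : (fun i : ℕ => (K i : ℝ)) =o[atTop] fun i : ℕ => (K (i + 1) : ℝ) := by
    rw [isLittleO_iff]
    intro ε hε
    filter_upwards [eventually_ge_atTop (max 1 ⌈ε⁻¹⌉₊)] with i hi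
    have hi1 : 1 ≤ i := le_trans (le_max_left _ _) hi
    have hic : ⌈ε⁻¹⌉₊ ≤ i := le_trans (le_max_right _ _) hi
    have h1 : ε⁻¹ ≤ (i : ℝ) := le_trans (Nat.le_ceil _) (by exact_mod_cast hic)
    have h2 : (1 : ℝ) ≤ ε * i := by
      rw [← mul_inv_cancel₀ hε.ne']
      exact mul_le_mul_of_nonneg_left h1 hε.le
    have h3 : (i : ℝ) * K i + 1 ≤ (K (i + 1) : ℝ) := by exact_mod_cast hKgrow i hi1
    have hKi0 : (0 : ℝ) ≤ K i := Nat.cast_nonneg _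
    have hKi10 : (0 : ℝ) ≤ K (i + 1) := Nat.cast_nonneg _
    rw [Real.norm_natCast, Real.norm_natCast]
    calc (K i : ℝ) = 1 * K i := (one_mul _).symm
      _ ≤ (ε * i) * K i := mul_le_mul_of_nonneg_right h2 hKi0
      _ = ε * ((i : ℝ) * K i) := by ring
      _ ≤ ε * ((i : ℝ) * K i + 1) := by nlinarith
      _ ≤ ε * K (i + 1) := mul_le_mul_of_nonneg_left h3 hε.le
  set f : ℕ → ℕ := fun n => Nat.findGreatest (fun i => K i ≤ n) n with hfdef
  have hKgei : ∀ i, 1 ≤ i → i ≤ K i := by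
    intro i hi
    induction i, hi using Nat.le_induction with
    | base => rw [hK1]
    | succ i hi ih => have := hKlt i hi; omega
  have hf : ∀ i, 1 ≤ i → ∀ n, K i ≤ n → n < K (i + 1) → f n = i := by
    intro i hi n hKn hnK
    have hin : i ≤ n := le_trans (hKgei i hi) hKn
    have hle : i ≤ f n := Nat.le_findGreatest hin hKn
    have hge : f n ≤ i := by
      by_contra h
      push_neg at h
      have hPf : K (f n) ≤ n := Nat.findGreatest_spec (P := fun j => K j ≤ n) (n := n) hin hKn
      have : K (i + 1) ≤ K (f n) := hKmono (i + 1) (f n) (by omega) (by omega)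
      omega
    omega
  have hfb : ∀ n : ℕ, (f n : ℝ) ≤ 1 * plog (plog n) := by
    intro n
    rw [one_mul]
    rcases le_or_gt (f n) 1 with h | h
    · calc (f n : ℝ) ≤ 1 := by exact_mod_cast h
        _ ≤ plog (plog n) := one_le_plog _
    · have hKfn : K (f n) ≤ n := by
        have h0 : K 0 ≤ n := by rw [hK0]; exact Nat.zero_le n
        exact Nat.findGreatest_spec (P := fun j => K j ≤ n) (n := n) (Nat.zero_le n) h0
      have hexp2 : Real.exp (Real.exp (f n)) ≤ (K (f n) : ℝ) := hKexp (f n) (by omega)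
      have hn : Real.exp (Real.exp (f n)) ≤ (n : ℝ) :=
        le_trans hexp2 (by exact_mod_cast hKfn)
      have h1 : Real.exp (f n) ≤ Real.log n := by
        rw [← Real.log_exp (Real.exp (f n))]
        exact Real.log_le_log (Real.exp_pos _) hn
      have h2 : Real.exp (f n) ≤ plog n := le_trans h1 (le_max_left _ _)
      have h3 : (f n : ℝ) ≤ Real.log (plog n) := by
        rw [← Real.log_exp (f n)]
        exact Real.log_le_log (Real.exp_pos _) h2
      exact le_trans h3 (le_max_left _ _)
  have hblock : ∀ i, 1 ≤ i →
      (1 : ℝ) ≤ ∑ n ∈ Finset.Ico (K i) (K (i + 1)), ψ (4 ^ f n * n) * plog n ^ d := by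
    intro i hi
    have hab : K i ≤ K (i + 1) := (hKlt i hi).le
    have hsum : c i ≤ ∑ m ∈ Finset.Ico (4 ^ i * K i) (4 ^ i * K (i + 1)), g m := by
      rw [hKsucc i hi]; exact hstep4 i (K i)
    rw [sum_Ico_mul_blocks (4 ^ i) g (K i) (K (i + 1)) hab] at hsum
    have hinner : ∀ n ∈ Finset.Ico (K i) (K (i + 1)),
        ∑ m ∈ Finset.Ico (4 ^ i * n) (4 ^ i * (n + 1)), g m
          ≤ c i * (ψ (4 ^ i * n) * plog n ^ d) := by
      intro n hn
      have hn1 : 1 ≤ n := le_trans (hKpos i hi) (Finset.mem_Ico.1 hn).1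
      have h4pos : 0 < 4 ^ i := pow_pos (by norm_num : (0 : ℕ) < 4) i
      have hterm : ∀ m ∈ Finset.Ico (4 ^ i * n) (4 ^ i * (n + 1)),
          g m ≤ ψ (4 ^ i * n) * (L i * plog n) ^ d := by
        intro m hm
        obtain ⟨hm1, hm2⟩ := Finset.mem_Ico.1 hm
        have hm0 : 1 ≤ m := le_trans (Nat.mul_pos h4pos hn1) hm1
        have hψm : ψ m ≤ ψ (4 ^ i * n) := hψanti hm1
        have hmle : (m : ℝ) ≤ (4 : ℝ) ^ (i + 1) * n := by
          have h4 : 4 ^ i * (n + 1) ≤ 4 ^ (i + 1) * n := by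
            have hle4 : n + 1 ≤ 4 * n := by omega
            calc 4 ^ i * (n + 1) ≤ 4 ^ i * (4 * n) := Nat.mul_le_mul_left _ hle4
              _ = 4 ^ (i + 1) * n := by ring
          exact_mod_cast (lt_of_lt_of_le hm2 h4).le
        have hplogm : plog m ≤ L i * plog n := by
          have hmR : (0 : ℝ) < m := by exact_mod_cast hm0
          have hlm : Real.log m ≤ Real.log ((4 : ℝ) ^ (i + 1) * n) :=
            Real.log_le_log hmR hmle
          have hlcalc : Real.log ((4 : ℝ) ^ (i + 1) * n)
              = ((i : ℝ) + 1) * Real.log 4 + Real.log n := by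
            rw [Real.log_mul (by positivity) (by positivity), Real.log_pow]
            push_cast
            ring
          have hln : Real.log n ≤ plog n := le_max_left _ _
          have hp1 : 1 ≤ plog n := one_le_plog _
          have hLi : L i = 1 + ((i : ℝ) + 1) * Real.log 4 := rfl
          have hA : ((i : ℝ) + 1) * Real.log 4 ≤ ((i : ℝ) + 1) * Real.log 4 * plog n := by
            nlinarith [mul_nonneg (by positivity : (0:ℝ) ≤ ((i : ℝ) + 1) * Real.log 4)
              (sub_nonneg.2 hp1)]
          have hbound : Real.log m ≤ L i * plog n := by
            rw [hLi]; nlinarith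
          have h1b : (1 : ℝ) ≤ L i * plog n := by
            have := mul_le_mul (hL1 i) hp1 zero_le_one (hLpos i).le
            linarith
          exact max_le hbound h1b
        have hpow : plog m ^ d ≤ (L i * plog n) ^ d :=
          pow_le_pow_left₀ (plog_pos m).le hplogm d
        exact mul_le_mul hψm hpow (pow_nonneg (plog_pos m).le d) (hψpos _).le
      calc ∑ m ∈ Finset.Ico (4 ^ i * n) (4 ^ i * (n + 1)), g m
          ≤ ∑ _m ∈ Finset.Ico (4 ^ i * n) (4 ^ i * (n + 1)),
              ψ (4 ^ i * n) * (L i * plog n) ^ d := Finset.sum_le_sum hterm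
        _ = ((Finset.Ico (4 ^ i * n) (4 ^ i * (n + 1))).card : ℝ)
              * (ψ (4 ^ i * n) * (L i * plog n) ^ d) := by
            rw [Finset.sum_const, nsmul_eq_mul]
        _ = ((4 : ℝ) ^ i) * (ψ (4 ^ i * n) * (L i * plog n) ^ d) := by
            rw [Nat.card_Ico]
            congr 1
            have : 4 ^ i * (n + 1) - 4 ^ i * n = 4 ^ i := by
              rw [Nat.mul_succ]; omega
            rw [this]
            push_cast
            ring
        _ = c i * (ψ (4 ^ i * n) * plog n ^ d) := by
            rw [hcdef, mul_pow]
            ring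
    have htotal : c i ≤ c i *
        ∑ n ∈ Finset.Ico (K i) (K (i + 1)), ψ (4 ^ i * n) * plog n ^ d := by
      rw [Finset.mul_sum]
      exact le_trans hsum (Finset.sum_le_sum hinner)
    have h1 : (1 : ℝ) ≤ ∑ n ∈ Finset.Ico (K i) (K (i + 1)), ψ (4 ^ i * n) * plog n ^ d :=
      (le_mul_iff_one_le_right (hcpos i)).1 htotal
    calc (1 : ℝ) ≤ ∑ n ∈ Finset.Ico (K i) (K (i + 1)), ψ (4 ^ i * n) * plog n ^ d := h1
      _ = ∑ n ∈ Finset.Ico (K i) (K (i + 1)), ψ (4 ^ f n * n) * plog n ^ d := by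
          refine Finset.sum_congr rfl (fun n hn => ?_)
          obtain ⟨h1', h2'⟩ := Finset.mem_Ico.1 hn
          rw [hf i hi n h1' h2']
  have hcum : ∀ I : ℕ,
      (I : ℝ) ≤ ∑ n ∈ Finset.Ico (K 1) (K (I + 1)), ψ (4 ^ f n * n) * plog n ^ d := by
    intro I
    induction I with
    | zero => simp
    | succ I ih =>
        rw [← Finset.sum_Ico_consecutive _ (hKmono 1 (I + 1) le_rfl (by omega))
          (hKlt (I + 1) (by omega)).le]
        push_cast
        have hb := hblock (I + 1) (by omega)
        linarith
  have hnots : ¬ Summable (fun n : ℕ => ψ (4 ^ f n * n) * plog n ^ d) := by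
    intro hs
    obtain ⟨I, hI⟩ := exists_nat_gt (∑' n : ℕ, ψ (4 ^ f n * n) * plog n ^ d)
    have hle : ∑ n ∈ Finset.Ico (K 1) (K (I + 1)), ψ (4 ^ f n * n) * plog n ^ d
        ≤ ∑' n : ℕ, ψ (4 ^ f n * n) * plog n ^ d :=
      Summable.sum_le_tsum _
        (fun n _ => mul_nonneg (hψpos _).le (pow_nonneg (plog_pos _).le d)) hs
    linarith [hcum I]
  exact ⟨K, hK1, hKpos, hKlt, hKexp, ho, f, hf, ⟨1, one_pos, hfb⟩, hnots⟩
end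

section
/- Let k ∈ ℕ, let b, A₁,…,A_k, N₁,…,N_k be positive integers with gcd(A₁,…,A_k) = 1, let P = {b + A₁n₁ + ⋯ + A_kn_k : n_i ∈ ℤ, |n_i| ≤ N_i for all i} be the associated generalised arithmetic progression, and let d ∈ ℕ. Then #{n ∈ P : d ∣ n} ≪_k N₁⋯N_k (1/d + 1/min_{1≤i≤k} N_i), where the implied constant depends only on k. -/
open Finset

lemma countA (N : ℕ) (q : ℤ) (hq : 0 < q) (r : ℤ) :
    ((((Finset.Icc (-(N:ℤ)) N)).filter (fun x => q ∣ x - r)).card : ℝ)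
      ≤ 2 * N / q + 2 := by
  set s := (Finset.Icc (-(N:ℤ)) N).filter (fun x => q ∣ x - r) with hs
  set d1 := ((N:ℤ) - r)/q with hd1
  set d2 := (-(N:ℤ) - r)/q with hd2
  have hsub : s ⊆ (Finset.Icc d2 d1).image (fun t => r + q * t) := by
    intro x hx
    simp only [hs, mem_filter, Finset.mem_Icc] at hx
    refine Finset.mem_image.2 ⟨(x - r)/q, ?_, ?_⟩
    · refine Finset.mem_Icc.2 ⟨?_, ?_⟩
      · exact Int.ediv_le_ediv hq (by linarith [hx.1.1])
      · exact Int.ediv_le_ediv hq (by linarith [hx.1.2])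
    · have := Int.ediv_mul_cancel hx.2
      linarith
  have hcard : s.card ≤ (d1 - d2 + 1).toNat := by
    calc s.card ≤ _ := Finset.card_le_card hsub
    _ ≤ (Finset.Icc d2 d1).card := Finset.card_image_le
    _ = _ := by rw [Int.card_Icc]; congr 1; ring
  have h1 : q * d1 ≤ (N:ℤ) - r := by
    have e := Int.mul_ediv_add_emod ((N:ℤ) - r) q
    have m := Int.emod_nonneg ((N:ℤ) - r) (ne_of_gt hq)
    rw [hd1]; linarith
  have h2 : -(N:ℤ) - r < q * d2 + q := by
    have e := Int.mul_ediv_add_emod (-(N:ℤ) - r) q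
    have m := Int.emod_lt_of_pos (-(N:ℤ) - r) hq
    rw [hd2]; linarith
  have hkey : q * (d1 - d2 + 1) ≤ 2 * N + 2 * q := by
    have : q * (d1 - d2 + 1) = q * d1 - q * d2 + q := by ring
    linarith
  have hq' : (0:ℝ) < q := by exact_mod_cast hq
  have hrhs : (2 * (N:ℝ) / q + 2) = (2*N + 2*q)/q := by field_simp
  rw [hrhs, le_div_iff₀ hq']
  rcases le_or_gt (d1 - d2 + 1) 0 with h | h
  · have h0 : (d1 - d2 + 1).toNat = 0 := Int.toNat_of_nonpos h
    rw [h0] at hcard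
    have : s.card = 0 := Nat.le_zero.mp hcard
    rw [this]
    simp only [Nat.cast_zero, zero_mul]
    positivity
  · have hc2 : (s.card : ℝ) ≤ ((d1 - d2 + 1 : ℤ) : ℝ) := by
      have ht : ((d1 - d2 + 1).toNat : ℤ) = d1 - d2 + 1 := Int.toNat_of_nonneg (le_of_lt h)
      have : (s.card : ℤ) ≤ d1 - d2 + 1 := by omega
      exact_mod_cast this
    have hkeyR : (q:ℝ) * ((d1:ℝ) - d2 + 1) ≤ 2*N + 2*q := by exact_mod_cast hkey
    push_cast at hc2
    nlinarith [mul_le_mul_of_nonneg_right hc2 hq'.le]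

lemma countB (N A m : ℕ) (hm : 0 < m) (c : ℤ) :
    (((Finset.Icc (-(N:ℤ)) N).filter (fun x => (m:ℤ) ∣ c + A * x)).card : ℝ)
      ≤ 2 * N * (Nat.gcd A m) / m + 2 := by
  set g := Nat.gcd A m with hgdef
  have hg : 0 < g := Nat.gcd_pos_of_pos_right _ hm
  set q := m / g with hqdef
  have hq : 0 < q := Nat.div_pos (Nat.le_of_dvd hm (Nat.gcd_dvd_right _ _)) hg
  have hmq : m = g * q := (Nat.mul_div_cancel' (Nat.gcd_dvd_right A m)).symm
  set s := (Finset.Icc (-(N:ℤ)) N).filter (fun x => (m:ℤ) ∣ c + A * x) with hs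
  rcases Finset.eq_empty_or_nonempty s with he | ⟨r, hr⟩
  · rw [he]
    simp only [Finset.card_empty, Nat.cast_zero]
    positivity
  · have hrs := hr
    simp only [hs, mem_filter] at hrs
    have hsub : s ⊆ (Finset.Icc (-(N:ℤ)) N).filter (fun x => (q:ℤ) ∣ x - r) := by
      intro x hx
      simp only [hs, mem_filter] at hx
      refine mem_filter.2 ⟨hx.1, ?_⟩
      have hdvd : (m:ℤ) ∣ (A:ℤ) * (x - r) := by
        have := dvd_sub hx.2 hrs.2
        have e : c + (A:ℤ)*x - (c + A*r) = A * (x - r) := by ring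
        rwa [e] at this
      have hA : (A:ℤ) = (g:ℤ) * (A / g : ℕ) := by
        exact_mod_cast (Nat.mul_div_cancel' (Nat.gcd_dvd_left A m)).symm
      have hdvd2 : ((g:ℤ) * q) ∣ (g:ℤ) * ((A / g : ℕ) * (x - r)) := by
        rw [← mul_assoc, ← hA]
        exact_mod_cast hmq ▸ hdvd
      have hdvd3 : (q:ℤ) ∣ ((A / g : ℕ):ℤ) * (x - r) :=
        (mul_dvd_mul_iff_left (by exact_mod_cast hg.ne' : (g:ℤ) ≠ 0)).mp hdvd2
      have hcop : IsCoprime ((q:ℕ):ℤ) ((A / g : ℕ):ℤ) := by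
        rw [Int.isCoprime_iff_gcd_eq_one, Int.gcd_natCast_natCast]
        exact Nat.Coprime.symm (Nat.coprime_div_gcd_div_gcd hg)
      exact hcop.dvd_of_dvd_mul_left hdvd3
    have hq' : (0:ℤ) < q := by exact_mod_cast hq
    have := (countA N q hq' r)
    have hcard : (s.card : ℝ) ≤ 2 * N / q + 2 := by
      refine le_trans ?_ this
      exact_mod_cast Nat.cast_le.mpr (Finset.card_le_card hsub)
    refine hcard.trans (le_of_eq ?_)
    have hqr : (q:ℝ) = m / g := by
      rw [hmq]; push_cast; field_simp
    rw [hqr]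
    have hg' : (g:ℝ) ≠ 0 := by positivity
    have hm' : (m:ℝ) ≠ 0 := by positivity
    field_simp

lemma countC : ∀ (k : ℕ) (A N : Fin k → ℕ) (c : ℤ) (m : ℕ), 0 < m →
    Nat.gcd (Finset.univ.gcd A) m = 1 →
    (((Fintype.piFinset (fun i => Finset.Icc (-(N i:ℤ)) (N i))).filter
        (fun n => (m:ℤ) ∣ c + ∑ i, (A i:ℤ) * n i)).card : ℝ)
      ≤ (∏ i, (2*(N i:ℝ)+1)) / m
        + 3^k * (∏ i, (2*(N i:ℝ)+1)) * ∑ j, 1/(2*(N j:ℝ)+1) := by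
  intro k
  induction k with
  | zero =>
    intro A N c m hm hgcd
    have hm1 : m = 1 := by simpa using hgcd
    subst hm1
    have h1 : ((Fintype.piFinset (fun i : Fin 0 => Finset.Icc (-(N i:ℤ)) (N i))).filter
        (fun n => ((1:ℕ):ℤ) ∣ c + ∑ i, (A i:ℤ) * n i)).card ≤ 1 := by
      refine le_trans (Finset.card_filter_le _ _) ?_
      rw [Fintype.card_piFinset]
      simp
    have h2 : (((Fintype.piFinset (fun i : Fin 0 => Finset.Icc (-(N i:ℤ)) (N i))).filter
        (fun n => ((1:ℕ):ℤ) ∣ c + ∑ i, (A i:ℤ) * n i)).card : ℝ) ≤ 1 := by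
      exact_mod_cast h1
    refine le_trans h2 ?_
    simp
  | succ k ih =>
    intro A N c m hm hgcd
    set g := Nat.gcd (A 0) m with hgdef
    have hg : 0 < g := Nat.gcd_pos_of_pos_right _ hm
    have hgm : g ∣ m := Nat.gcd_dvd_right _ _
    set S := (Fintype.piFinset (fun i : Fin (k+1) => Finset.Icc (-(N i:ℤ)) (N i))).filter
        (fun n => (m:ℤ) ∣ c + ∑ i, (A i:ℤ) * n i) with hSdef
    set S' := (Fintype.piFinset (fun i : Fin k => Finset.Icc (-(N i.succ:ℤ)) (N i.succ))).filter
        (fun t => (g:ℤ) ∣ c + ∑ i, (A i.succ:ℤ) * t i) with hS'def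
    have hmaps : ∀ n ∈ S, (fun i => n i.succ) ∈ S' := by
      intro n hn
      simp only [hSdef, mem_filter, Fintype.mem_piFinset] at hn
      refine mem_filter.2 ⟨Fintype.mem_piFinset.2 fun i => hn.1 i.succ, ?_⟩
      have hsum : c + ∑ i, (A i:ℤ) * n i
          = ((A 0:ℤ)) * n 0 + (c + ∑ i : Fin k, (A i.succ:ℤ) * n i.succ) := by
        rw [Fin.sum_univ_succ]; ring
      have h1 : (g:ℤ) ∣ c + ∑ i, (A i:ℤ) * n i :=
        dvd_trans (by exact_mod_cast hgm) hn.2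
      have h2 : (g:ℤ) ∣ ((A 0:ℤ)) * n 0 :=
        Dvd.dvd.mul_right (by exact_mod_cast Nat.gcd_dvd_left (A 0) m) _
      have h3 := dvd_sub h1 h2
      rw [hsum] at h3
      simpa using h3
    have hfiber : ∀ t ∈ S', ((S.filter (fun n => (fun i => n i.succ) = t)).card : ℝ)
        ≤ 2 * (N 0) * g / m + 2 := by
      intro t _
      have hinj : ∀ x ∈ S.filter (fun n => (fun i => n i.succ) = t),
          ∀ y ∈ S.filter (fun n => (fun i => n i.succ) = t), x 0 = y 0 → x = y := by
        intro x hx y hy h0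
        simp only [mem_filter] at hx hy
        funext i
        refine Fin.cases ?_ ?_ i
        · exact h0
        · intro j
          have e1 := congrFun hx.2 j
          have e2 := congrFun hy.2 j
          rw [e1, e2]
      have himg : ∀ x ∈ S.filter (fun n => (fun i => n i.succ) = t),
          x 0 ∈ (Finset.Icc (-(N 0:ℤ)) (N 0)).filter
            (fun y => (m:ℤ) ∣ (c + ∑ i : Fin k, (A i.succ:ℤ) * t i) + (A 0) * y) := by
        intro x hx
        simp only [mem_filter, hSdef, Fintype.mem_piFinset] at hx
        refine mem_filter.2 ⟨hx.1.1 0, ?_⟩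
        have hsum : c + ∑ i, (A i:ℤ) * x i
            = (c + ∑ i : Fin k, (A i.succ:ℤ) * x i.succ) + (A 0:ℤ) * x 0 := by
          rw [Fin.sum_univ_succ]; ring
        have hd := hx.1.2
        rw [hsum] at hd
        have ht : ∀ i : Fin k, x i.succ = t i := fun i => congrFun hx.2 i
        simpa [ht] using hd
      have hcardle : (S.filter (fun n => (fun i => n i.succ) = t)).card
          ≤ ((Finset.Icc (-(N 0:ℤ)) (N 0)).filter
            (fun y => (m:ℤ) ∣ (c + ∑ i : Fin k, (A i.succ:ℤ) * t i) + (A 0) * y)).card :=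
        Finset.card_le_card_of_injOn (fun x => x 0) himg (fun x hx y hy => hinj x hx y hy)
      calc ((S.filter (fun n => (fun i => n i.succ) = t)).card : ℝ)
          ≤ _ := Nat.cast_le.mpr hcardle
        _ ≤ 2 * (N 0) * (Nat.gcd (A 0) m) / m + 2 := countB (N 0) (A 0) m hm _
        _ = 2 * (N 0) * g / m + 2 := by rw [hgdef]
    have hsplit : (S.card : ℝ) ≤ (S'.card : ℝ) * (2 * (N 0) * g / m + 2) := by
      rw [Finset.card_eq_sum_card_fiberwise hmaps]
      push_cast
      calc ∑ t ∈ S', ((S.filter (fun n => (fun i => n i.succ) = t)).card : ℝ)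
          ≤ ∑ _t ∈ S', (2 * (N 0 : ℝ) * g / m + 2) := Finset.sum_le_sum hfiber
        _ = _ := by rw [Finset.sum_const, nsmul_eq_mul]
    -- gcd hypothesis for the tail
    have hgcd' : Nat.gcd (Finset.univ.gcd (fun i : Fin k => A i.succ)) g = 1 := by
      have h1 : Nat.gcd (Finset.univ.gcd (fun i : Fin k => A i.succ)) g
          ∣ Nat.gcd (Finset.univ.gcd A) m := by
        apply Nat.dvd_gcd
        · apply Finset.dvd_gcd
          intro i _
          refine Fin.cases ?_ ?_ i
          · exact dvd_trans (Nat.gcd_dvd_right _ _) (Nat.gcd_dvd_left (A 0) m)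
          · intro j
            exact dvd_trans (Nat.gcd_dvd_left _ _) (Finset.gcd_dvd (mem_univ j))
        · exact dvd_trans (Nat.gcd_dvd_right _ _) hgm
      rw [hgcd] at h1
      exact Nat.dvd_one.mp h1
    have hIH := ih (fun i => A i.succ) (fun i => N i.succ) c g hg hgcd'
    -- arithmetic
    set a := (N 0 : ℝ) with hadef
    set P' := ∏ i : Fin k, (2*((N i.succ):ℝ)+1) with hP'def
    set SG := ∑ j : Fin k, 1/(2*((N j.succ):ℝ)+1) with hSGdef
    have ha : 0 ≤ a := by positivity
    have hP'1 : (1:ℝ) ≤ P' := by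
      rw [hP'def]
      calc (1:ℝ) = ∏ _i : Fin k, 1 := by simp
        _ ≤ _ := Finset.prod_le_prod (fun i _ => by norm_num) (fun i _ => by
          have : (0:ℝ) ≤ (N i.succ : ℝ) := Nat.cast_nonneg _
          linarith)
    have hP'0 : (0:ℝ) ≤ P' := by linarith
    have hSG0 : (0:ℝ) ≤ SG := Finset.sum_nonneg (fun j _ => by positivity)
    have hg' : (0:ℝ) < g := by exact_mod_cast hg
    have hM : (0:ℝ) < m := by exact_mod_cast hm
    have hGM : (g:ℝ) ≤ m := by exact_mod_cast Nat.le_of_dvd hm hgm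
    have hG1 : (1:ℝ) ≤ g := by exact_mod_cast hg
    have h3 : (1:ℝ) ≤ 3^k := one_le_pow₀ (by norm_num : (1:ℝ) ≤ 3)
    have hB : (0:ℝ) ≤ 2 * (N 0) * g / m + 2 := by positivity
    have hstep : (S.card : ℝ) ≤ (P'/g + 3^k*P'*SG) * (2*a*g/m + 2) := by
      refine hsplit.trans ?_
      exact mul_le_mul_of_nonneg_right hIH hB
    refine hstep.trans ?_
    rw [Fin.prod_univ_succ, Fin.sum_univ_succ]
    have hexp : (P'/g + 3^k*P'*SG) * (2*a*g/m + 2)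
        = 2*a*P'/m + 2*a*3^k*P'*SG*g/m + 2*P'/g + 2*3^k*P'*SG := by
      field_simp
      ring
    have hrhs : (3:ℝ)^(k+1) * ((2*a+1)*P') * (1/(2*a+1) + SG)
        = 3^(k+1)*P' + 3^(k+1)*(2*a+1)*P'*SG := by
      have h2a : (2*a+1) ≠ 0 := by positivity
      field_simp
    have t1 : 2*a*P'/m ≤ (2*a+1)*P'/m := by
      gcongr
      linarith
    have t2 : 2*a*3^k*P'*SG*g/m ≤ 2*a*(3:ℝ)^k*P'*SG := by
      rw [div_le_iff₀ hM]
      have := mul_le_mul_of_nonneg_left hGM (by positivity : (0:ℝ) ≤ 2*a*3^k*P'*SG)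
      linarith
    have t3 : 2*P'/g ≤ 2*P' := by
      rw [div_le_iff₀ hg']
      have h := mul_le_mul_of_nonneg_left hG1 (show (0:ℝ) ≤ 2*P' by linarith)
      linarith
    rw [hexp]
    calc 2*a*P'/m + 2*a*3^k*P'*SG*g/m + 2*P'/g + 2*3^k*P'*SG
        ≤ (2*a+1)*P'/m + (2*a*(3:ℝ)^k*P'*SG + 2*P' + 2*3^k*P'*SG) := by linarith
      _ ≤ (2*a+1)*P'/m + (3^(k+1)*P' + 3^(k+1)*(2*a+1)*P'*SG) := by
          have hPS : (0:ℝ) ≤ (3:ℝ)^k*P'*SG := by positivity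
          have hint1 : (0:ℝ) ≤ a * ((3:ℝ)^k*P'*SG) := mul_nonneg ha hPS
          have hint2 : P' ≤ (3:ℝ)^k * P' := by
            have := mul_le_mul_of_nonneg_right h3 hP'0
            linarith
          have hp : (3:ℝ)^(k+1) = 3^k*3 := pow_succ 3 k
          rw [hp]
          linarith
      _ = (2*a+1)*P'/m + 3^(k+1) * ((2*a+1)*P') * (1/(2*a+1) + SG) := by rw [hrhs]

/-- Counting multiples of `d` in a generalised arithmetic progression
`P = {b + A₁n₁ + ⋯ + A_kn_k : |n_i| ≤ N_i}` with `gcd(A₁,…,A_k) = 1`: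
`#{n ∈ P : d ∣ n} ≪_k N₁⋯N_k (1/d + 1/min_i N_i)`. -/
theorem gap_divisibility_count
    (k : ℕ) (hk : 0 < k) :
    ∃ Ck : ℝ, 0 < Ck ∧
      ∀ (b : ℕ) (A N : Fin k → ℕ) (d : ℕ),
        0 < b → (∀ i, 0 < A i) → (∀ i, 0 < N i) → 0 < d →
        Finset.univ.gcd A = 1 →
        (Nat.card {x : ℤ //
            (∃ n : Fin k → ℤ, (∀ i, |n i| ≤ (N i : ℤ)) ∧
              x = (b : ℤ) + ∑ i, (A i : ℤ) * n i) ∧ (d : ℤ) ∣ x} : ℝ)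
          ≤ Ck * (∏ i, (N i : ℝ)) * (1 / (d : ℝ) + 1 / ((sInf (Set.range N) : ℕ) : ℝ)) := by
  refine ⟨3^k + k * 9^k, by positivity, ?_⟩
  intro b A N d hb hA hN hd hgcd
  haveI : Nonempty (Fin k) := ⟨⟨0, hk⟩⟩
  set S := (Fintype.piFinset (fun i : Fin k => Finset.Icc (-(N i:ℤ)) (N i))).filter
      (fun n => (d:ℤ) ∣ (b:ℤ) + ∑ i, (A i:ℤ) * n i) with hSdef
  -- step 1: card of subtype ≤ S.card
  have hstep1 : (Nat.card {x : ℤ //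
      (∃ n : Fin k → ℤ, (∀ i, |n i| ≤ (N i : ℤ)) ∧
        x = (b : ℤ) + ∑ i, (A i : ℤ) * n i) ∧ (d : ℤ) ∣ x}) ≤ S.card := by
    rw [← Nat.card_eq_finsetCard S]
    have hf : ∀ x : {x : ℤ // (∃ n : Fin k → ℤ, (∀ i, |n i| ≤ (N i : ℤ)) ∧
        x = (b : ℤ) + ∑ i, (A i : ℤ) * n i) ∧ (d : ℤ) ∣ x},
        x.2.1.choose ∈ S := by
      intro x
      have hspec := x.2.1.choose_spec
      refine mem_filter.2 ⟨Fintype.mem_piFinset.2 fun i => ?_, ?_⟩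
      · exact Finset.mem_Icc.2 (abs_le.mp (hspec.1 i))
      · rw [← hspec.2]; exact x.2.2
    have hinj : Function.Injective (fun x : {x : ℤ // (∃ n : Fin k → ℤ, (∀ i, |n i| ≤ (N i : ℤ)) ∧
        x = (b : ℤ) + ∑ i, (A i : ℤ) * n i) ∧ (d : ℤ) ∣ x} => (⟨x.2.1.choose, hf x⟩ : {n // n ∈ S})) := by
      intro x y hxy
      have hx := x.2.1.choose_spec
      have hy := y.2.1.choose_spec
      have : x.2.1.choose = y.2.1.choose := Subtype.ext_iff.mp hxy
      apply Subtype.ext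
      rw [hx.2, hy.2, this]
    exact Nat.card_le_card_of_injective _ hinj
  -- step 2: core bound
  have hgcd' : Nat.gcd (Finset.univ.gcd A) d = 1 := by rw [hgcd]; exact Nat.gcd_one_left d
  have hstep2 := countC k A N (b:ℤ) d hd hgcd'
  -- step 3: comparisons
  set mN := sInf (Set.range N) with hmN
  have hmem : mN ∈ Set.range N := Nat.sInf_mem (Set.range_nonempty N)
  obtain ⟨i0, hi0⟩ := hmem
  have hmN1 : 0 < mN := by rw [← hi0]; exact hN i0
  have hmNR : (0:ℝ) < mN := by exact_mod_cast hmN1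
  have hdR : (0:ℝ) < d := by exact_mod_cast hd
  have hprod : (∏ i, (2*(N i:ℝ)+1)) ≤ 3^k * ∏ i, (N i:ℝ) := by
    have : ∀ i : Fin k, (2*(N i:ℝ)+1) ≤ 3 * (N i:ℝ) := by
      intro i
      have h1 : (1:ℝ) ≤ (N i:ℝ) := by exact_mod_cast hN i
      linarith
    calc (∏ i, (2*(N i:ℝ)+1)) ≤ ∏ i, 3 * (N i:ℝ) :=
          Finset.prod_le_prod (fun i _ => by positivity) (fun i _ => this i)
      _ = 3^k * ∏ i, (N i:ℝ) := by
          rw [Finset.prod_mul_distrib, Finset.prod_const]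
          simp
  have hsum : (∑ j, 1/(2*(N j:ℝ)+1)) ≤ k * (1/(mN:ℝ)) := by
    calc (∑ j, 1/(2*(N j:ℝ)+1)) ≤ ∑ _j : Fin k, 1/(mN:ℝ) := by
          refine Finset.sum_le_sum fun j _ => ?_
          have h1 : (mN:ℝ) ≤ 2*(N j:ℝ)+1 := by
            have : mN ≤ N j := Nat.sInf_le ⟨j, rfl⟩
            have : (mN:ℝ) ≤ (N j:ℝ) := by exact_mod_cast this
            linarith
          exact one_div_le_one_div_of_le hmNR h1
      _ = k * (1/(mN:ℝ)) := by rw [Finset.sum_const]; simp [nsmul_eq_mul]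
  have hP0 : (0:ℝ) ≤ ∏ i, (N i:ℝ) := Finset.prod_nonneg (fun i _ => by positivity)
  have h3k : (0:ℝ) < 3^k := by positivity
  calc (Nat.card _ : ℝ) ≤ (S.card : ℝ) := by exact_mod_cast hstep1
    _ ≤ (∏ i, (2*(N i:ℝ)+1)) / d + 3^k * (∏ i, (2*(N i:ℝ)+1)) * ∑ j, 1/(2*(N j:ℝ)+1) := hstep2
    _ ≤ (3^k * ∏ i, (N i:ℝ)) / d + 3^k * (3^k * ∏ i, (N i:ℝ)) * (k * (1/(mN:ℝ))) := by
        gcongr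
    _ ≤ (3^k + k * 9^k) * (∏ i, (N i:ℝ)) * (1 / (d:ℝ) + 1 / (mN:ℝ)) := by
        have h9 : (3:ℝ)^k * 3^k = 9^k := by
          rw [← mul_pow]; norm_num
        have hk0 : (0:ℝ) ≤ k := by positivity
        have e1 : ((3:ℝ)^k * ∏ i, (N i:ℝ)) / d = 3^k * (∏ i, (N i:ℝ)) * (1/(d:ℝ)) := by ring
        have e2 : (3:ℝ)^k * (3^k * ∏ i, (N i:ℝ)) * ((k:ℝ) * (1/(mN:ℝ)))
            = (k:ℝ) * 9^k * (∏ i, (N i:ℝ)) * (1/(mN:ℝ)) := by rw [← h9]; ring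
        rw [e1, e2]
        have hd1 : (0:ℝ) ≤ 1/(d:ℝ) := by positivity
        have hm1 : (0:ℝ) ≤ 1/(mN:ℝ) := by positivity
        have h9k : (0:ℝ) ≤ (9:ℝ)^k := by positivity
        nlinarith [mul_nonneg (mul_nonneg (mul_nonneg hk0 h9k) hP0) hd1,
          mul_nonneg (mul_nonneg h3k.le hP0) hm1]
end

section
/- Let k ∈ ℕ, let b, A₁,…,A_k, N₁,…,N_k be positive integers with gcd(A₁,…,A_k) = 1, and let P = {b + A₁n₁ + ⋯ + A_kn_k : n_i ∈ ℤ, 1 ≤ n_i ≤ N_i for all i} be a proper asymmetric generalised arithmetic progression. Then for every d ∈ ℕ one has #{n ∈ P : d ∣ n}/(N₁⋯N_k) = 1/d + O_k(1/min_{1≤i≤k} N_i), where the implied constant depends only on k. -/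
lemma residue_count (q r : ℤ) (N : ℕ) (hq : 0 < q) :
    |((((Finset.Icc (1:ℤ) (N:ℤ)).filter (fun n => q ∣ n - r)).card : ℝ)) - (N:ℝ)/(q:ℝ)| ≤ 1 := by
  have e₂ := Int.mul_ediv_add_emod ((N:ℤ) - r) q
  have m₂0 := Int.emod_nonneg ((N:ℤ) - r) hq.ne'
  have m₂1 := Int.emod_lt_of_pos ((N:ℤ) - r) hq
  have e₁ := Int.mul_ediv_add_emod (r - 1) q
  have m₁0 := Int.emod_nonneg (r - 1) hq.ne'
  have m₁1 := Int.emod_lt_of_pos (r - 1) hq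
  set t₂ : ℤ := ((N:ℤ) - r) / q with ht₂
  set u₁ : ℤ := (r - 1) / q with hu₁
  have h₂le : q * t₂ ≤ (N:ℤ) - r := by omega
  have h₂gt : (N:ℤ) - r < q * t₂ + q := by omega
  have h₁le : q * u₁ ≤ r - 1 := by omega
  have h₁gt : r - 1 < q * u₁ + q := by omega
  have key : (Finset.Icc (1:ℤ) (N:ℤ)).filter (fun n => q ∣ n - r) =
      (Finset.Icc (-u₁) t₂).map ⟨fun t => r + q * t, fun a b h => by
        simp only at h; exact mul_left_cancel₀ hq.ne' (by linarith)⟩ := by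
    ext n
    simp only [Finset.mem_filter, Finset.mem_Icc, Finset.mem_map, Function.Embedding.coeFn_mk, DFunLike.coe]
    constructor
    · rintro ⟨⟨hn1, hn2⟩, t, ht⟩
      refine ⟨t, ⟨?_, ?_⟩, by linarith⟩
      · by_contra hc
        push_neg at hc
        have h3 : q * t ≤ q * (-u₁ - 1) := mul_le_mul_of_nonneg_left (by omega) hq.le
        nlinarith
      · by_contra hc
        push_neg at hc
        have h3 : q * (t₂ + 1) ≤ q * t := mul_le_mul_of_nonneg_left (by omega) hq.le
        nlinarith
    · rintro ⟨t, ⟨ht1, ht2⟩, rfl⟩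
      have h3 : q * (-u₁) ≤ q * t := mul_le_mul_of_nonneg_left ht1 hq.le
      have h4 : q * t ≤ q * t₂ := mul_le_mul_of_nonneg_left ht2 hq.le
      exact ⟨⟨by nlinarith, by nlinarith⟩, t, by ring⟩
  rw [key, Finset.card_map, Int.card_Icc]
  set s : ℤ := t₂ + 1 - -u₁ with hs
  have hqs1 : (N:ℤ) + 1 - q ≤ q * s := by
    have h : q * s = q * t₂ + q + q * u₁ := by rw [hs]; ring
    omega
  have hqs2 : q * s ≤ (N:ℤ) - 1 + q := by
    have h : q * s = q * t₂ + q + q * u₁ := by rw [hs]; ring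
    omega
  have hs0 : 0 ≤ s := by
    by_contra hc
    push_neg at hc
    have h3 : q * s ≤ q * (-1) := mul_le_mul_of_nonneg_left (by omega) hq.le
    have := Int.natCast_nonneg N
    linarith
  rw [show ((s.toNat : ℕ) : ℝ) = ((s:ℤ) : ℝ) by rw [← Int.cast_natCast, Int.toNat_of_nonneg hs0]]
  have hqR : (0:ℝ) < (q:ℝ) := by exact_mod_cast hq
  have hqs1R : (N:ℝ) + 1 - q ≤ (q:ℝ) * (s:ℤ) := by exact_mod_cast hqs1
  have hqs2R : (q:ℝ) * (s:ℤ) ≤ (N:ℝ) - 1 + q := by exact_mod_cast hqs2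
  rw [abs_le]
  constructor
  · have h : (N:ℝ)/q ≤ ((s:ℤ):ℝ) + 1 := by rw [div_le_iff₀ hqR]; nlinarith
    linarith
  · have h : ((s:ℤ):ℝ) - 1 ≤ (N:ℝ)/q := by rw [le_div_iff₀ hqR]; nlinarith
    linarith

lemma single_count (a m : ℕ) (hm : 0 < m) (c : ℤ) (N : ℕ) :
    |((((Finset.Icc (1:ℤ) (N:ℤ)).filter (fun x => (m:ℤ) ∣ (a:ℤ) * x + c)).card : ℝ))
      - (if ((Nat.gcd a m : ℤ) ∣ c) then (N:ℝ) * (Nat.gcd a m) / m else 0)| ≤ 1 := by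
  set g : ℕ := Nat.gcd a m with hgdef
  have hg : 0 < g := Nat.gcd_pos_of_pos_right _ hm
  by_cases hc : (g:ℤ) ∣ c
  · rw [if_pos hc]
    obtain ⟨c', rfl⟩ := hc
    set a' : ℕ := a / g with ha'
    set q : ℕ := m / g with hq'
    have hq : 0 < q := Nat.div_pos (Nat.le_of_dvd hm (Nat.gcd_dvd_right a m)) hg
    have haa : (a:ℤ) = (g:ℤ) * (a':ℤ) := by
      rw [ha']; exact_mod_cast (Nat.mul_div_cancel' (Nat.gcd_dvd_left a m)).symm
    have hmm : (m:ℤ) = (g:ℤ) * (q:ℤ) := by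
      rw [hq']; exact_mod_cast (Nat.mul_div_cancel' (Nat.gcd_dvd_right a m)).symm
    have hcop : Nat.Coprime a' q := Nat.coprime_div_gcd_div_gcd hg
    have hcopZ : IsCoprime (a':ℤ) (q:ℤ) := by
      rw [Int.isCoprime_iff_gcd_eq_one]
      exact_mod_cast hcop
    obtain ⟨u, v, huv⟩ := hcopZ
    set r : ℤ := -c' * u with hr
    have hiff : ∀ x : ℤ, ((m:ℤ) ∣ (a:ℤ) * x + (g:ℤ) * c') ↔ ((q:ℤ) ∣ x - r) := by
      intro x
      have h1 : (a:ℤ) * x + (g:ℤ) * c' = (g:ℤ) * ((a':ℤ) * x + c') := by rw [haa]; ring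
      rw [hmm, h1, mul_dvd_mul_iff_left (show (g:ℤ) ≠ 0 by exact_mod_cast hg.ne')]
      have hrc : (a':ℤ) * r + c' = c' * (v * q) := by
        linear_combination (-c') * huv
      constructor
      · intro ⟨w, hw⟩
        exact ⟨u * w - u * c' * v + v * (x - r),
          by linear_combination u * hw - (x - r) * huv - u * hrc⟩
      · intro ⟨w, hw⟩
        exact ⟨a' * w + c' * v, by linear_combination (a':ℤ) * hw + hrc⟩
    rw [Finset.filter_congr (fun x _ => hiff x)]
    have := residue_count (q:ℤ) r N (by exact_mod_cast hq)
    have hNq : (N:ℝ) / (q:ℤ) = (N:ℝ) * g / m := by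
      have hmR : (m:ℝ) = (g:ℝ) * (q:ℝ) := by exact_mod_cast hmm
      rw [hmR]
      have hgR : (g:ℝ) ≠ 0 := by positivity
      have hqR : (q:ℝ) ≠ 0 := by positivity
      field_simp
      push_cast; ring
    rw [← hNq]
    exact this
  · rw [if_neg hc]
    have hempty : (Finset.Icc (1:ℤ) (N:ℤ)).filter (fun x => (m:ℤ) ∣ (a:ℤ) * x + c) = ∅ := by
      rw [Finset.filter_eq_empty_iff]
      intro x _ hdvd
      apply hc
      have hga : (g:ℤ) ∣ (a:ℤ) := by exact_mod_cast Nat.gcd_dvd_left a m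
      have hgm : (g:ℤ) ∣ (m:ℤ) := by exact_mod_cast Nat.gcd_dvd_right a m
      have h1 : (g:ℤ) ∣ (a:ℤ) * x + c := hgm.trans hdvd
      have h2 : (g:ℤ) ∣ (a:ℤ) * x := hga.mul_right x
      simpa using h1.sub h2
    rw [hempty]
    simp

lemma key_count : ∀ (k : ℕ) (b : ℤ) (A N : Fin (k+1) → ℕ) (m : ℕ), 0 < m → (∀ i, 0 < N i) →
    Nat.gcd (Finset.univ.gcd A) m = 1 →
    |((((Fintype.piFinset (fun i => Finset.Icc (1:ℤ) ((N i : ℤ)))).filter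
        (fun n => (m:ℤ) ∣ b + ∑ i, (A i : ℤ) * n i)).card : ℝ)) - (∏ i, (N i:ℝ)) / m|
      ≤ (∏ i, (N i:ℝ)) * ∑ i, ((N i:ℝ))⁻¹ := by
  intro k
  induction k with
  | zero =>
    intro b A N m hm hN hgcd
    have hgA : Nat.gcd (A 0) m = 1 := by
      simpa using hgcd
    have hfilt : ((Fintype.piFinset (fun i : Fin 1 => Finset.Icc (1:ℤ) ((N i : ℤ)))).filter
          (fun n => (m:ℤ) ∣ b + ∑ i, (A i : ℤ) * n i)).card
        = (((Finset.Icc (1:ℤ) ((N 0 : ℤ)))).filter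
          (fun x => (m:ℤ) ∣ (A 0 : ℤ) * x + b)).card := by
      refine Finset.card_bij' (fun n _ => n 0) (fun x _ => fun _ => x) ?_ ?_ ?_ ?_
      · intro n hn
        simp only [Finset.mem_filter, Fintype.mem_piFinset, Fin.forall_fin_succ,
          Fin.sum_univ_succ, Finset.univ_eq_empty, Finset.sum_empty, IsEmpty.forall_iff,
          and_true, add_zero] at hn ⊢
        exact ⟨hn.1, by rw [add_comm]; exact hn.2⟩
      · intro x hx
        simp only [Finset.mem_filter, Fintype.mem_piFinset, Fin.forall_fin_succ,
          Fin.sum_univ_succ, Finset.univ_eq_empty, Finset.sum_empty, IsEmpty.forall_iff,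
          and_true, add_zero] at hx ⊢
        exact ⟨hx.1, by rw [add_comm]; exact hx.2⟩
      · intro n hn
        funext i
        have : i = 0 := Subsingleton.elim _ _
        rw [this]
      · intro x hx
        rfl
    rw [hfilt]
    have h := single_count (A 0) m hm b (N 0)
    rw [hgA] at h
    simp only [Nat.cast_one, isUnit_one, IsUnit.dvd, if_true, mul_one] at h
    calc |(((Finset.Icc (1:ℤ) ((N 0:ℤ))).filter (fun x => (m:ℤ) ∣ (A 0:ℤ) * x + b)).card : ℝ)
          - (∏ i, (N i:ℝ)) / m| = |_ - (N 0 : ℝ) / m| := by rw [Fin.prod_univ_succ, Fin.prod_univ_zero, mul_one]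
      _ ≤ 1 := h
      _ ≤ (∏ i, (N i:ℝ)) * ∑ i, ((N i:ℝ))⁻¹ := by
          rw [Fin.prod_univ_succ, Fin.prod_univ_zero, mul_one, Fin.sum_univ_succ,
            Finset.univ_eq_empty, Finset.sum_empty, add_zero]
          have : (0:ℝ) < (N 0 : ℝ) := by exact_mod_cast hN 0
          rw [mul_inv_cancel₀ this.ne']
  | succ k ih =>
    intro b A N m hm hN hgcd
    set g : ℕ := Nat.gcd (A 0) m with hgdef
    have hg : 0 < g := Nat.gcd_pos_of_pos_right _ hm
    have hgm : g ∣ m := Nat.gcd_dvd_right _ _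
    have hgcd' : Nat.gcd (Finset.univ.gcd (fun i : Fin (k+1) => A i.succ)) g = 1 := by
      have hdvd : Nat.gcd (Finset.univ.gcd (fun i : Fin (k+1) => A i.succ)) g ∣
          Nat.gcd (Finset.univ.gcd A) m := by
        apply Nat.dvd_gcd
        · apply Finset.dvd_gcd
          intro i _
          induction i using Fin.cases with
          | zero => exact (Nat.gcd_dvd_right _ _).trans (Nat.gcd_dvd_left _ _)
          | succ j =>
            refine (Nat.gcd_dvd_left _ _).trans ?_
            exact Finset.gcd_dvd (Finset.mem_univ j)
        · exact (Nat.gcd_dvd_right _ _).trans hgm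
      rw [hgcd] at hdvd
      exact Nat.dvd_one.mp hdvd
    have hpi : (Fintype.piFinset fun i : Fin (k+2) => Finset.Icc (1:ℤ) ((N i:ℤ))) =
        ((Finset.Icc (1:ℤ) ((N 0:ℤ))) ×ˢ
          Fintype.piFinset fun i : Fin (k+1) => Finset.Icc (1:ℤ) ((N i.succ:ℤ))).map
          (Fin.consEquiv fun _ => ℤ).toEmbedding := by
      have h := Finset.filter_piFinset_eq_map_consEquiv
        (fun i : Fin (k+2) => Finset.Icc (1:ℤ) ((N i:ℤ))) (fun _ => True)
      simp [Fin.tail] at h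
      exact h
    set Q := Fintype.piFinset fun i : Fin (k+1) => Finset.Icc (1:ℤ) ((N i.succ:ℤ)) with hQdef
    have hdecomp : (((Fintype.piFinset fun i : Fin (k+2) => Finset.Icc (1:ℤ) ((N i:ℤ))).filter
          (fun n => (m:ℤ) ∣ b + ∑ i, (A i : ℤ) * n i)).card)
        = ∑ y ∈ Q, ((((Finset.Icc (1:ℤ) ((N 0:ℤ)))).filter
            (fun x => (m:ℤ) ∣ (A 0:ℤ) * x + (b + ∑ i : Fin (k+1), (A i.succ : ℤ) * y i))).card) := by
      rw [Finset.card_filter, hpi, Finset.sum_map, Finset.sum_product_right]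
      apply Finset.sum_congr rfl
      intro y _
      rw [Finset.card_filter]
      apply Finset.sum_congr rfl
      intro x _
      simp only [Equiv.coe_toEmbedding, Fin.consEquiv_apply, Fin.sum_univ_succ,
        Fin.cons_zero, Fin.cons_succ]
      congr 1
      rw [eq_iff_iff]
      constructor <;> intro h <;> [skip; skip] <;>
        · convert h using 1
          ring
    have hsingle : ∀ y : Fin (k+1) → ℤ, |((((Finset.Icc (1:ℤ) ((N 0:ℤ)))).filter
            (fun x => (m:ℤ) ∣ (A 0:ℤ) * x + (b + ∑ i : Fin (k+1), (A i.succ : ℤ) * y i))).card : ℝ)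
          - (if ((g : ℤ) ∣ (b + ∑ i : Fin (k+1), (A i.succ : ℤ) * y i))
              then (N 0:ℝ) * g / m else 0)| ≤ 1 :=
      fun y => single_count (A 0) m hm _ (N 0)
    set R : ℕ := (Q.filter fun y => (g:ℤ) ∣ (b + ∑ i : Fin (k+1), (A i.succ : ℤ) * y i)).card
      with hRdef
    set α : ℝ := (N 0:ℝ) * g / m with hαdef
    have hmain : ∑ y ∈ Q, (if ((g : ℤ) ∣ (b + ∑ i : Fin (k+1), (A i.succ : ℤ) * y i))
        then α else 0) = (R:ℝ) * α := by
      rw [← Finset.sum_filter, Finset.sum_const, nsmul_eq_mul]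
    have hQcard : ((Q.card : ℕ) : ℝ) = ∏ i : Fin (k+1), (N i.succ : ℝ) := by
      rw [hQdef, Fintype.card_piFinset]
      push_cast
      apply Finset.prod_congr rfl
      intro i _
      rw [Int.card_Icc]
      simp
    have h1 : |(∑ y ∈ Q, ((((Finset.Icc (1:ℤ) ((N 0:ℤ)))).filter
            (fun x => (m:ℤ) ∣ (A 0:ℤ) * x + (b + ∑ i : Fin (k+1), (A i.succ : ℤ) * y i))).card : ℝ))
          - (R:ℝ) * α| ≤ ∏ i : Fin (k+1), (N i.succ : ℝ) := by
      rw [← hmain, ← Finset.sum_sub_distrib, ← hQcard]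
      calc |∑ y ∈ Q, _| ≤ ∑ y ∈ Q, |((((Finset.Icc (1:ℤ) ((N 0:ℤ)))).filter
            (fun x => (m:ℤ) ∣ (A 0:ℤ) * x + (b + ∑ i : Fin (k+1), (A i.succ : ℤ) * y i))).card : ℝ)
          - (if ((g : ℤ) ∣ (b + ∑ i : Fin (k+1), (A i.succ : ℤ) * y i))
              then α else 0)| := Finset.abs_sum_le_sum_abs _ _
        _ ≤ Q.card • 1 := Finset.sum_le_card_nsmul _ _ 1 (fun y _ => hsingle y)
        _ = (Q.card : ℝ) := by rw [nsmul_eq_mul, mul_one]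
    have h2 := ih b (fun i => A i.succ) (fun i => N i.succ) g hg (fun i => hN _) hgcd'
    have hprodsucc : (∏ i : Fin (k+2), (N i:ℝ)) = (N 0:ℝ) * ∏ i : Fin (k+1), (N i.succ:ℝ) :=
      Fin.prod_univ_succ _
    have hsumsucc : (∑ i : Fin (k+2), (N i:ℝ)⁻¹) = (N 0:ℝ)⁻¹ + ∑ i : Fin (k+1), (N i.succ:ℝ)⁻¹ :=
      Fin.sum_univ_succ _
    set P2 : ℝ := ∏ i : Fin (k+1), (N i.succ : ℝ) with hP2
    set S2 : ℝ := ∑ i : Fin (k+1), (N i.succ : ℝ)⁻¹ with hS2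
    have hP2pos : 0 < P2 := by
      rw [hP2]
      apply Finset.prod_pos
      intro i _
      exact_mod_cast hN i.succ
    have hN0pos : (0:ℝ) < (N 0 : ℝ) := by exact_mod_cast hN 0
    have hgR : (0:ℝ) < (g:ℝ) := by exact_mod_cast hg
    have hmR : (0:ℝ) < (m:ℝ) := by exact_mod_cast hm
    have hα0 : 0 ≤ α := by positivity
    have hαle : α ≤ (N 0:ℝ) := by
      rw [hαdef, div_le_iff₀ hmR]
      have : (g:ℝ) ≤ (m:ℝ) := by exact_mod_cast Nat.le_of_dvd hm hgm
      nlinarith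
    have hkey : α * (P2 / g) = (∏ i : Fin (k+2), (N i:ℝ))/m := by
      rw [hprodsucc, hαdef]
      field_simp
    -- now the R estimate from ih
    have h2' : |(R:ℝ) - P2 / g| ≤ P2 * S2 := h2
    rw [hdecomp]
    push_cast [hdecomp]
    have heq : (∑ y ∈ Q, ((((Finset.Icc (1:ℤ) ((N 0:ℤ)))).filter
            (fun x => (m:ℤ) ∣ (A 0:ℤ) * x + (b + ∑ i : Fin (k+1), (A i.succ : ℤ) * y i))).card : ℝ))
          - (∏ i : Fin (k+2), (N i:ℝ))/m
        = ((∑ y ∈ Q, ((((Finset.Icc (1:ℤ) ((N 0:ℤ)))).filter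
            (fun x => (m:ℤ) ∣ (A 0:ℤ) * x + (b + ∑ i : Fin (k+1), (A i.succ : ℤ) * y i))).card : ℝ))
          - (R:ℝ) * α) + α * ((R:ℝ) - P2 / g) := by
      linear_combination hkey
    rw [heq]
    calc |_ + α * ((R:ℝ) - P2/g)| ≤ |(∑ y ∈ Q, ((((Finset.Icc (1:ℤ) ((N 0:ℤ)))).filter
            (fun x => (m:ℤ) ∣ (A 0:ℤ) * x + (b + ∑ i : Fin (k+1), (A i.succ : ℤ) * y i))).card : ℝ))
          - (R:ℝ) * α| + |α * ((R:ℝ) - P2/g)| := abs_add_le _ _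
      _ ≤ P2 + (N 0:ℝ) * (P2 * S2) := by
          have := abs_mul α ((R:ℝ) - P2/g)
          have h3 : |α * ((R:ℝ) - P2/g)| ≤ (N 0:ℝ) * (P2 * S2) := by
            rw [abs_mul, abs_of_nonneg hα0]
            exact mul_le_mul hαle h2' (abs_nonneg _) hN0pos.le
          linarith [h1]
      _ = (∏ i : Fin (k+2), (N i:ℝ)) * ∑ i : Fin (k+2), (N i:ℝ)⁻¹ := by
          rw [hprodsucc, hsumsucc]
          field_simp

/-- Counting multiples of `d` in a proper asymmetric generalised arithmetic
progression `P⁺ = {b + A₁n₁ + ⋯ + A_kn_k : 1 ≤ n_i ≤ N_i}` with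
`gcd(A₁,…,A_k) = 1`:
`#{n ∈ P⁺ : d ∣ n}/(N₁⋯N_k) = 1/d + O_k(1/min_i N_i)`. -/
theorem proper_gap_divisibility_count
    (k : ℕ) (hk : 0 < k) :
    ∃ Ck : ℝ, 0 < Ck ∧
      ∀ (b : ℕ) (A N : Fin k → ℕ) (d : ℕ),
        0 < b → (∀ i, 0 < A i) → (∀ i, 0 < N i) → 0 < d →
        Finset.univ.gcd A = 1 →
        (∀ m n : Fin k → ℤ,
          (∀ i, 1 ≤ m i ∧ m i ≤ (N i : ℤ)) → (∀ i, 1 ≤ n i ∧ n i ≤ (N i : ℤ)) →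
          (b : ℤ) + ∑ i, (A i : ℤ) * m i = (b : ℤ) + ∑ i, (A i : ℤ) * n i → m = n) →
        |(Nat.card {x : ℤ //
            (∃ n : Fin k → ℤ, (∀ i, 1 ≤ n i ∧ n i ≤ (N i : ℤ)) ∧
              x = (b : ℤ) + ∑ i, (A i : ℤ) * n i) ∧ (d : ℤ) ∣ x} : ℝ)
            / (∏ i, (N i : ℝ)) - 1 / (d : ℝ)|
          ≤ Ck / ((sInf (Set.range N) : ℕ) : ℝ) := by
  obtain ⟨k', rfl⟩ : ∃ k', k = k' + 1 := ⟨k - 1, by omega⟩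
  refine ⟨((k' + 1 : ℕ) : ℝ), by exact_mod_cast Nat.succ_pos k', ?_⟩
  intro b A N d hb hA hN hd hgcd hproper
  set F := (Fintype.piFinset fun i : Fin (k'+1) => Finset.Icc (1:ℤ) ((N i:ℤ))).filter
    (fun n => (d:ℤ) ∣ (b:ℤ) + ∑ i, (A i:ℤ) * n i) with hFdef
  have hcard : Nat.card {x : ℤ //
      (∃ n : Fin (k'+1) → ℤ, (∀ i, 1 ≤ n i ∧ n i ≤ (N i : ℤ)) ∧
        x = (b : ℤ) + ∑ i, (A i : ℤ) * n i) ∧ (d : ℤ) ∣ x} = F.card := by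
    have hset : {x : ℤ | (∃ n : Fin (k'+1) → ℤ, (∀ i, 1 ≤ n i ∧ n i ≤ (N i : ℤ)) ∧
          x = (b : ℤ) + ∑ i, (A i : ℤ) * n i) ∧ (d : ℤ) ∣ x}
        = ↑(F.image (fun n => (b:ℤ) + ∑ i, (A i:ℤ) * n i)) := by
      ext x
      simp only [Set.mem_setOf_eq, Finset.coe_image, Set.mem_image, Finset.mem_coe,
        hFdef, Finset.mem_filter, Fintype.mem_piFinset, Finset.mem_Icc]
      constructor
      · rintro ⟨⟨n, hn, rfl⟩, hdvd⟩
        exact ⟨n, ⟨fun i => hn i, hdvd⟩, rfl⟩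
      · rintro ⟨n, ⟨hn, hdvd⟩, rfl⟩
        exact ⟨⟨n, fun i => hn i, rfl⟩, hdvd⟩
    have h0 : Nat.card {x : ℤ //
        (∃ n : Fin (k'+1) → ℤ, (∀ i, 1 ≤ n i ∧ n i ≤ (N i : ℤ)) ∧
          x = (b : ℤ) + ∑ i, (A i : ℤ) * n i) ∧ (d : ℤ) ∣ x} =
        Set.ncard {x : ℤ | (∃ n : Fin (k'+1) → ℤ, (∀ i, 1 ≤ n i ∧ n i ≤ (N i : ℤ)) ∧
          x = (b : ℤ) + ∑ i, (A i : ℤ) * n i) ∧ (d : ℤ) ∣ x} :=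
      Nat.card_coe_set_eq _
    rw [h0, hset, Set.ncard_coe_finset]
    apply Finset.card_image_of_injOn
    intro n hn n' hn' heq
    simp only [hFdef, Finset.coe_filter, Set.mem_setOf_eq, Fintype.mem_piFinset,
      Finset.mem_Icc] at hn hn'
    exact hproper n n' (fun i => hn.1 i) (fun i => hn'.1 i) heq
  rw [hcard]
  have hkey := key_count k' (b:ℤ) A N d hd hN (by rw [hgcd]; exact Nat.gcd_one_left d)
  rw [← hFdef] at hkey
  have hprodpos : (0:ℝ) < ∏ i, (N i:ℝ) := by
    apply Finset.prod_pos
    intro i _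
    exact_mod_cast hN i
  have hdR : (0:ℝ) < (d:ℝ) := by exact_mod_cast hd
  set M : ℕ := sInf (Set.range N) with hMdef
  obtain ⟨i₀, hi₀⟩ : M ∈ Set.range N := Nat.sInf_mem (Set.range_nonempty N)
  have hMpos : 0 < M := by rw [← hi₀]; exact hN i₀
  have hMR : (0:ℝ) < (M:ℝ) := by exact_mod_cast hMpos
  have hsum : ∑ i : Fin (k'+1), (N i:ℝ)⁻¹ ≤ ((k'+1:ℕ):ℝ) / (M:ℝ) := by
    have h2 : ∀ i ∈ Finset.univ, (N i:ℝ)⁻¹ ≤ (M:ℝ)⁻¹ := by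
      intro i _
      apply inv_anti₀ hMR
      exact_mod_cast Nat.sInf_le (Set.mem_range_self i)
    calc ∑ i : Fin (k'+1), (N i:ℝ)⁻¹ ≤ Finset.univ.card • (M:ℝ)⁻¹ :=
          Finset.sum_le_card_nsmul _ _ _ h2
      _ = ((k'+1:ℕ):ℝ) / (M:ℝ) := by
          rw [Finset.card_univ, Fintype.card_fin, nsmul_eq_mul]
          push_cast
          ring
  have hdiv : (F.card:ℝ) / (∏ i, (N i:ℝ)) - 1 / (d:ℝ)
      = ((F.card:ℝ) - (∏ i, (N i:ℝ)) / d) / (∏ i, (N i:ℝ)) := by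
    rw [sub_div, div_right_comm, div_self hprodpos.ne', one_div]
  rw [hdiv, abs_div, abs_of_pos hprodpos, div_le_iff₀ hprodpos]
  calc |(F.card:ℝ) - (∏ i, (N i:ℝ)) / d| ≤ (∏ i, (N i:ℝ)) * ∑ i, (N i:ℝ)⁻¹ := hkey
    _ ≤ ((k'+1:ℕ):ℝ) / (M:ℝ) * ∏ i, (N i:ℝ) := by
        rw [mul_comm]
        exact mul_le_mul_of_nonneg_right hsum hprodpos.le
end

section
/- Let k ≥ 2, let n ∈ ℕ, let γ₁,…,γ_k ∈ (−1, 0], and let ψ(n) be a real number with n^{−2} ≤ ψ(n). Then the k-dimensional Lebesgue measure of the set A_n = {(α₁,…,α_k) ∈ [0,1]^k : ‖nα₁ − γ₁‖ ⋯ ‖nα_k − γ_k‖ < ψ(n)} satisfies μ_k(A_n) ≪_k ψ(n)(log n)^{k−1}, with the implied constant depending only on k. -/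
open MeasureTheory

open ENNReal

lemma nint_nonneg (x : ℝ) : 0 ≤ nint x := abs_nonneg _

lemma nint_le_one (x : ℝ) : nint x ≤ 1 := (abs_sub_round x).trans (by norm_num)

lemma measurable_nint : Measurable nint := by
  have h1 : Measurable (round : ℝ → ℤ) := by
    have : (round : ℝ → ℤ) = fun x => ⌊x + 1/2⌋ := funext round_eq
    rw [this]
    exact Int.measurable_floor.comp (measurable_id.add_const _)
  have h : Measurable fun x : ℝ => (round x : ℝ) :=
    (measurable_from_top (f := (Int.cast : ℤ → ℝ))).comp h1
  exact (measurable_id.sub h).abs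

lemma onedim (n : ℕ) (hn : 0 < n) (γ : ℝ) (hγ : γ ∈ Set.Ioc (-1:ℝ) 0) (ε : ℝ) :
    volume {x : ℝ | x ∈ Set.Icc (0:ℝ) 1 ∧ nint ((n:ℝ) * x - γ) < ε} ≤
      ENNReal.ofReal (8 * ε) := by
  rcases le_or_gt ε 0 with hε | hε
  · have he : {x : ℝ | x ∈ Set.Icc (0:ℝ) 1 ∧ nint ((n:ℝ) * x - γ) < ε} = ∅ := by
      ext x
      simp only [Set.mem_setOf_eq, Set.mem_empty_iff_false, iff_false, not_and]
      intro _ h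
      exact absurd (lt_of_le_of_lt (nint_nonneg _) h) (by linarith)
    rw [he]; simp
  · have hnR : (0:ℝ) < n := by exact_mod_cast hn
    have hsub : {x : ℝ | x ∈ Set.Icc (0:ℝ) 1 ∧ nint ((n:ℝ) * x - γ) < ε} ⊆
        ⋃ m ∈ Finset.Icc (0:ℤ) (n+1),
          Set.Ioo ((γ + m - ε)/n) ((γ + m + ε)/n) := by
      rintro x ⟨hx, hfx⟩
      obtain ⟨hx0, hx1⟩ := hx
      set y := (n:ℝ) * x - γ with hy
      set m := round y with hm
      have hym : |y - m| < ε := hfx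
      have hym2 : |y - m| ≤ 1/2 := abs_sub_round y
      have hy0 : 0 ≤ y := by
        have : 0 ≤ (n:ℝ) * x := by positivity
        have := hγ.2
        simp only [hy]; linarith
      have hy1 : y ≤ n + 1 := by
        have h1 : (n:ℝ) * x ≤ n := by nlinarith
        have := hγ.1
        simp only [hy]; linarith
      have habs := abs_le.mp hym2
      have hm0 : (0:ℤ) ≤ m := by
        have h5 : (-1:ℝ) < (m:ℝ) := by linarith
        have h6 : (-1:ℤ) < m := by exact_mod_cast h5
        omega
      have hm1 : m ≤ (n:ℤ) + 1 := by
        have h2 : (m:ℝ) ≤ n + 3/2 := by linarith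
        have : (m:ℝ) < (n:ℝ) + 2 := by linarith
        exact_mod_cast Int.lt_add_one_iff.mp (by exact_mod_cast this)
      refine Set.mem_biUnion (Finset.mem_Icc.mpr ⟨hm0, hm1⟩) ?_
      have h3 := abs_lt.mp hym
      constructor
      · rw [div_lt_iff₀ hnR]
        simp only [hy] at h3; nlinarith [h3.1]
      · rw [lt_div_iff₀ hnR]
        simp only [hy] at h3; nlinarith [h3.2]
    calc volume {x : ℝ | x ∈ Set.Icc (0:ℝ) 1 ∧ nint ((n:ℝ) * x - γ) < ε}
        ≤ ∑ m ∈ Finset.Icc (0:ℤ) (n+1),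
            volume (Set.Ioo ((γ + m - ε)/n) ((γ + m + ε)/n)) :=
          (measure_mono hsub).trans (measure_biUnion_finset_le _ _)
      _ = ∑ m ∈ Finset.Icc (0:ℤ) (n+1), ENNReal.ofReal (2 * ε / n) := by
          refine Finset.sum_congr rfl fun m _ => ?_
          rw [Real.volume_Ioo]
          congr 1
          field_simp
          ring
      _ ≤ ENNReal.ofReal (8 * ε) := by
          rw [Finset.sum_const, Int.card_Icc]
          have hcard : ((n:ℤ) + 1 + 1 - 0).toNat = n + 2 := by omega
          rw [hcard, nsmul_eq_mul]
          rw [← ENNReal.ofReal_natCast (n+2), ← ENNReal.ofReal_mul (by positivity)]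
          apply ENNReal.ofReal_le_ofReal
          push_cast
          have h4 : (n:ℝ) + 2 ≤ 4 * n := by
            have : (1:ℝ) ≤ n := by exact_mod_cast hn
            linarith
          calc ((n:ℝ) + 2) * (2 * ε / n) ≤ 4 * n * (2 * ε / n) :=
                mul_le_mul_of_nonneg_right h4 (by positivity)
            _ = 8 * ε := by field_simp; ring


lemma enn_mul_min (c a b : ℝ≥0∞) : c * min a b = min (c*a) (c*b) := by
  rcases le_total a b with h | h
  · rw [min_eq_left h, min_eq_left (mul_le_mul_right h c)]
  · rw [min_eq_right h, min_eq_right (mul_le_mul_right h c)]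

lemma enn_min_mul (M x y : ℝ≥0∞) (hM : 1 ≤ M) (hx : 1 ≤ x) (hy : 1 ≤ y) :
    min M (x * y) ≤ min M x * min M y := by
  rcases le_total x M with h | h
  · rcases le_total y M with h' | h'
    · rw [min_eq_right h, min_eq_right h']
      exact min_le_right _ _
    · rw [min_eq_left h']
      calc min M (x*y) ≤ M := min_le_left _ _
        _ = 1 * M := (one_mul M).symm
        _ ≤ min M x * M := mul_le_mul_left (le_min hM hx) M
  · rw [min_eq_left h]
    calc min M (x*y) ≤ M := min_le_left _ _
      _ = M * 1 := (mul_one M).symm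
      _ ≤ M * min M y := mul_le_mul_right (le_min hM hy) M

lemma min_prod_inv_le {ι : Type*} (s : Finset ι) (g : ι → ℝ≥0∞) (hg : ∀ j ∈ s, g j ≤ 1)
    (M : ℝ≥0∞) (hM : 1 ≤ M) :
    min M (∏ j ∈ s, g j)⁻¹ ≤ ∏ j ∈ s, min M (g j)⁻¹ := by
  induction s using Finset.cons_induction with
  | empty => simp [hM]
  | cons a s ha ih =>
    rw [Finset.prod_cons, Finset.prod_cons]
    have hga : g a ≤ 1 := hg a (Finset.mem_cons_self a s)
    have hgs : ∀ j ∈ s, g j ≤ 1 := fun j hj => hg j (Finset.mem_cons_of_mem hj)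
    have hps : ∏ j ∈ s, g j ≤ 1 := Finset.prod_le_one (fun j _ => zero_le) hgs
    have h1 : g a ≠ ∞ := (hga.trans_lt ENNReal.one_lt_top).ne
    have h2 : ∏ j ∈ s, g j ≠ ∞ := (hps.trans_lt ENNReal.one_lt_top).ne
    rw [ENNReal.mul_inv (Or.inr h2) (Or.inl h1)]
    calc min M ((g a)⁻¹ * (∏ j ∈ s, g j)⁻¹)
        ≤ min M (g a)⁻¹ * min M (∏ j ∈ s, g j)⁻¹ :=
          enn_min_mul M _ _ hM (ENNReal.one_le_inv.mpr hga) (ENNReal.one_le_inv.mpr hps)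
      _ ≤ min M (g a)⁻¹ * ∏ j ∈ s, min M (g j)⁻¹ := mul_le_mul_right (ih hgs) _

lemma min_inv_le_sum (v : ℝ) (hv : 0 ≤ v) (M : ℝ≥0∞) (T : ℕ) (hM : M ≤ 2^(T+1)) :
    min M (ENNReal.ofReal v)⁻¹ ≤
      1 + ∑ t ∈ Finset.range (T+1), (if v < (2:ℝ)⁻¹ ^ t then (2:ℝ≥0∞)^(t+1) else 0) := by
  have key : ∀ t₀ ∈ Finset.range (T+1), v < (2:ℝ)⁻¹ ^ t₀ →
      (2:ℝ≥0∞)^(t₀+1) ≤ ∑ t ∈ Finset.range (T+1), (if v < (2:ℝ)⁻¹ ^ t then (2:ℝ≥0∞)^(t+1) else 0) := by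
    intro t₀ ht₀ hlt
    have := Finset.single_le_sum (f := fun t => (if v < (2:ℝ)⁻¹ ^ t then (2:ℝ≥0∞)^(t+1) else 0))
      (fun t _ => zero_le) ht₀
    simp only [if_pos hlt] at this
    exact this
  rcases le_or_gt 1 v with h1 | h1
  · have : (ENNReal.ofReal v)⁻¹ ≤ 1 := by
      rw [ENNReal.inv_le_one]
      exact_mod_cast ENNReal.one_le_ofReal.mpr h1
    exact le_trans ((min_le_right _ _).trans this) le_self_add
  rcases lt_or_ge v ((2:ℝ)⁻¹ ^ T) with hvT | hvT
  · calc min M (ENNReal.ofReal v)⁻¹ ≤ M := min_le_left _ _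
      _ ≤ 2^(T+1) := hM
      _ ≤ ∑ t ∈ Finset.range (T+1), (if v < (2:ℝ)⁻¹ ^ t then (2:ℝ≥0∞)^(t+1) else 0) :=
          key T (Finset.self_mem_range_succ T) hvT
      _ ≤ _ := le_add_self
  · have hv0 : 0 < v := lt_of_lt_of_le (by positivity) hvT
    have hex : ∃ t, (2:ℝ)⁻¹ ^ (t+1) ≤ v := by
      refine ⟨T, le_trans ?_ hvT⟩
      exact pow_le_pow_of_le_one (by norm_num) (by norm_num) (Nat.le_succ T)
    set t₀ := Nat.find hex with ht₀def
    have hspec : (2:ℝ)⁻¹ ^ (t₀+1) ≤ v := Nat.find_spec hex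
    have ht₀T : t₀ ≤ T := Nat.find_le (by
      exact le_trans (pow_le_pow_of_le_one (by norm_num) (by norm_num) (Nat.le_succ T)) hvT)
    have hlt : v < (2:ℝ)⁻¹ ^ t₀ := by
      rcases Nat.eq_zero_or_pos t₀ with h | h
      · rw [h]; simpa using h1
      · obtain ⟨s, hs⟩ := Nat.exists_eq_succ_of_ne_zero h.ne'
        have h7 := Nat.find_min hex (m := s) (by omega)
        push_neg at h7
        have : s + 1 = t₀ := by omega
        rw [this] at h7
        exact h7
    have hinv : (ENNReal.ofReal v)⁻¹ ≤ (2:ℝ≥0∞)^(t₀+1) := by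
      have h2 : ENNReal.ofReal ((2:ℝ)⁻¹ ^ (t₀+1)) ≤ ENNReal.ofReal v :=
        ENNReal.ofReal_le_ofReal hspec
      have h3 : ENNReal.ofReal ((2:ℝ)⁻¹ ^ (t₀+1)) = ((2:ℝ≥0∞)⁻¹)^(t₀+1) := by
        rw [ENNReal.ofReal_pow (by norm_num)]
        congr 1
        rw [ENNReal.ofReal_inv_of_pos (by norm_num)]
        norm_num
      calc (ENNReal.ofReal v)⁻¹ ≤ (ENNReal.ofReal ((2:ℝ)⁻¹ ^ (t₀+1)))⁻¹ :=
            ENNReal.inv_le_inv' h2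
        _ = (2:ℝ≥0∞)^(t₀+1) := by rw [h3, ← ENNReal.inv_pow, inv_inv]
    calc min M (ENNReal.ofReal v)⁻¹ ≤ (2:ℝ≥0∞)^(t₀+1) := (min_le_right _ _).trans hinv
      _ ≤ ∑ t ∈ Finset.range (T+1), (if v < (2:ℝ)⁻¹ ^ t then (2:ℝ≥0∞)^(t+1) else 0) :=
          key t₀ (Finset.mem_range.mpr (by omega)) hlt
      _ ≤ _ := le_add_self


lemma lintegral_pi_prod : ∀ {m : ℕ} (φ : Fin m → ℝ → ℝ≥0∞), (∀ j, Measurable (φ j)) →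
    ∫⁻ y : Fin m → ℝ, ∏ j, φ j (y j) = ∏ j, ∫⁻ t, φ j t := by
  intro m
  induction m with
  | zero =>
      intro φ _
      simp [lintegral_const, volume_pi, Measure.pi_empty_univ]
  | succ m ih =>
      intro φ hφ
      have hmeas : Measurable fun y : Fin (m+1) → ℝ => ∏ j, φ j (y j) :=
        Finset.measurable_prod _ fun j _ => (hφ j).comp (measurable_pi_apply j)
      calc ∫⁻ y : Fin (m+1) → ℝ, ∏ j, φ j (y j)
          = ∫⁻ p : ℝ × (Fin m → ℝ), φ 0 p.1 * ∏ j : Fin m, φ j.succ (p.2 j) := by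
            rw [← ((volume_preserving_piFinSuccAbove (fun _ : Fin (m+1) => ℝ) 0).symm).lintegral_comp
              hmeas]
            congr 1
            ext p
            simp only [MeasurableEquiv.piFinSuccAbove_symm_apply, Fin.insertNthEquiv,
              Equiv.coe_fn_mk, Fin.insertNth_zero, Fin.prod_univ_succ, Fin.cons_zero, Fin.cons_succ, Fin.zero_succAbove, cast_eq]
        _ = (∫⁻ t, φ 0 t) * ∏ j : Fin m, ∫⁻ t, φ j.succ t := by
            rw [Measure.volume_eq_prod, lintegral_prod_mul (f := φ 0)
              (g := fun y : Fin m → ℝ => ∏ j, φ j.succ (y j)) (hφ 0).aemeasurable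
              (Finset.measurable_prod _ fun j _ =>
                (hφ j.succ).comp (measurable_pi_apply j)).aemeasurable]
            rw [ih _ fun j => hφ j.succ]
        _ = ∏ j, ∫⁻ t, φ j t := (Fin.prod_univ_succ (f := fun j => ∫⁻ t, φ j t)).symm


lemma coord_integral (n : ℕ) (hn : 0 < n) (γ : ℝ) (hγ : γ ∈ Set.Ioc (-1:ℝ) 0)
    (M : ℝ≥0∞) (T : ℕ) (hM : M ≤ 2^(T+1)) :
    ∫⁻ x in Set.Icc (0:ℝ) 1, min M (ENNReal.ofReal (nint ((n:ℝ) * x - γ)))⁻¹ ≤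
      1 + 16 * ((T:ℝ≥0∞)+1) := by
  have hmsets : ∀ t : ℕ, MeasurableSet {x : ℝ | nint ((n:ℝ) * x - γ) < (2:ℝ)⁻¹ ^ t} :=
    fun t => measurableSet_lt (measurable_nint.comp (by fun_prop)) measurable_const
  calc ∫⁻ x in Set.Icc (0:ℝ) 1, min M (ENNReal.ofReal (nint ((n:ℝ) * x - γ)))⁻¹
      ≤ ∫⁻ x in Set.Icc (0:ℝ) 1,
          (1 + ∑ t ∈ Finset.range (T+1),
            Set.indicator {x : ℝ | nint ((n:ℝ) * x - γ) < (2:ℝ)⁻¹ ^ t}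
              (fun _ => (2:ℝ≥0∞)^(t+1)) x) := by
        apply lintegral_mono
        intro x
        refine (min_inv_le_sum (nint ((n:ℝ)*x-γ)) (nint_nonneg _) M T hM).trans
          (le_of_eq (by simp [Set.indicator_apply]))
    _ = volume (Set.Icc (0:ℝ) 1) + ∑ t ∈ Finset.range (T+1),
          ∫⁻ x in Set.Icc (0:ℝ) 1, Set.indicator {x : ℝ | nint ((n:ℝ) * x - γ) < (2:ℝ)⁻¹ ^ t}
              (fun _ => (2:ℝ≥0∞)^(t+1)) x := by
        rw [lintegral_add_left measurable_const, setLIntegral_one,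
          lintegral_finset_sum _ (fun t _ => (measurable_const.indicator (hmsets t)))]
    _ ≤ 1 + ∑ t ∈ Finset.range (T+1), (16:ℝ≥0∞) := by
        gcongr with t ht
        · exact le_of_eq (by simp [Real.volume_Icc])
        · rw [lintegral_indicator (hmsets t), setLIntegral_const,
            Measure.restrict_apply (hmsets t)]
          have hle : volume ({x : ℝ | nint ((n:ℝ) * x - γ) < (2:ℝ)⁻¹ ^ t} ∩ Set.Icc 0 1)
              ≤ ENNReal.ofReal (8 * (2:ℝ)⁻¹ ^ t) := by
            refine le_trans (measure_mono ?_) (onedim n hn γ hγ ((2:ℝ)⁻¹ ^ t))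
            rintro x ⟨h1, h2⟩
            exact ⟨h2, h1⟩
          calc (2:ℝ≥0∞)^(t+1) * volume ({x : ℝ | nint ((n:ℝ) * x - γ) < (2:ℝ)⁻¹ ^ t} ∩ Set.Icc 0 1)
              ≤ (2:ℝ≥0∞)^(t+1) * ENNReal.ofReal (8 * (2:ℝ)⁻¹ ^ t) := mul_le_mul_right hle _
            _ = ENNReal.ofReal ((2:ℝ)^(t+1) * (8 * (2:ℝ)⁻¹ ^ t)) := by
                rw [← ENNReal.ofReal_ofNat 2, ← ENNReal.ofReal_pow (by norm_num),
                  ← ENNReal.ofReal_mul (by positivity)]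
            _ = ENNReal.ofReal 16 := by
                congr 1
                rw [inv_pow, pow_succ]
                field_simp
                ring
            _ = 16 := by norm_num
    _ = 1 + 16 * ((T:ℝ≥0∞)+1) := by
        rw [Finset.sum_const, Finset.card_range, nsmul_eq_mul]
        push_cast
        ring

/-- Convergence-part measure bound: for `k ≥ 2`, `γ₁,…,γ_k ∈ (-1,0]` and
`ψ(n) ≥ n⁻²`, the set
`A_n = {α ∈ [0,1]^k : ‖nα₁-γ₁‖⋯‖nα_k-γ_k‖ < ψ(n)}` satisfies
`μ_k(A_n) ≪_k ψ(n) (log n)^{k-1}`. -/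
theorem convergence_measure_bound
    (k : ℕ) (hk : 2 ≤ k) :
    ∃ Ck : ℝ, 0 < Ck ∧
      ∀ n : ℕ, 0 < n → ∀ γ : Fin k → ℝ, (∀ i, γ i ∈ Set.Ioc (-1 : ℝ) 0) →
        ∀ ψn : ℝ, ((n : ℝ) ^ 2)⁻¹ ≤ ψn →
          volume {α : Fin k → ℝ | (∀ i, α i ∈ Set.Icc (0 : ℝ) 1) ∧
              (∏ i, nint ((n : ℝ) * α i - γ i)) < ψn}
            ≤ ENNReal.ofReal (Ck * ψn * plog n ^ (k - 1)) := by
  refine ⟨8 * 97 ^ (k - 1), by positivity, ?_⟩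
  intro n hn γ hγ ψn hψ
  obtain ⟨m, rfl⟩ : ∃ m, k = m + 1 := ⟨k - 1, by omega⟩
  simp only [Nat.add_sub_cancel]
  have hnR : (0:ℝ) < n := by exact_mod_cast hn
  have hψ0 : 0 < ψn := lt_of_lt_of_le (by positivity) hψ
  have hplog1 : (1:ℝ) ≤ plog n := le_max_right _ _
  set A := {α : Fin (m+1) → ℝ | (∀ i, α i ∈ Set.Icc (0:ℝ) 1) ∧
      (∏ i, nint ((n:ℝ) * α i - γ i)) < ψn} with hA
  have h97 : (1:ℝ) ≤ 97 ^ m := one_le_pow₀ (by norm_num : (1:ℝ) ≤ 97)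
  have hpl : (1:ℝ) ≤ plog n ^ m := one_le_pow₀ hplog1
  rcases lt_or_ge (1/8 : ℝ) ψn with hbig | hsmall
  · have h1 : A ⊆ Set.pi Set.univ fun _ : Fin (m+1) => Set.Icc (0:ℝ) 1 := by
      intro α hα
      exact fun i _ => hα.1 i
    have h2 : volume (Set.pi Set.univ fun _ : Fin (m+1) => Set.Icc (0:ℝ) 1) = 1 := by
      rw [volume_pi_pi]
      simp [Real.volume_Icc]
    refine le_trans (measure_mono h1) ?_
    rw [h2, show (1:ℝ≥0∞) = ENNReal.ofReal 1 by simp]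
    apply ENNReal.ofReal_le_ofReal
    nlinarith [mul_le_mul_of_nonneg_left hpl (by positivity : (0:ℝ) ≤ 97 ^ m)]
  · -- main case : ψn ≤ 1/8
    set c : ℝ≥0∞ := ENNReal.ofReal (8 * ψn) with hc
    have hc0 : c ≠ 0 := by
      rw [hc]
      simp only [ne_eq, ENNReal.ofReal_eq_zero, not_le]
      linarith
    have hct : c ≠ ∞ := ENNReal.ofReal_ne_top
    have hc1 : c ≤ 1 := by
      rw [hc, show (1:ℝ≥0∞) = ENNReal.ofReal 1 by simp]
      exact ENNReal.ofReal_le_ofReal (by linarith)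
    set M := c⁻¹ with hMdef
    have hM1 : 1 ≤ M := ENNReal.one_le_inv.mpr hc1
    set L := Nat.log 2 n with hLdef
    set T := 2*L+1 with hTdef
    have hMT : M ≤ 2^(T+1) := by
      have h1 : M = ENNReal.ofReal ((8*ψn)⁻¹) := by
        rw [hMdef, hc, ← ENNReal.ofReal_inv_of_pos (by linarith)]
      have h3 : ((8*ψn)⁻¹ : ℝ) ≤ ψn⁻¹ := inv_anti₀ hψ0 (by linarith)
      have h4 : (ψn⁻¹ : ℝ) ≤ (n:ℝ)^2 := by
        have := inv_anti₀ (by positivity : (0:ℝ) < ((n:ℝ)^2)⁻¹) hψ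
        simpa using this
      have h6 : n < 2^(L+1) := Nat.lt_pow_succ_log_self (by norm_num) n
      have h7 : (n:ℝ) ≤ 2^(L+1) := by exact_mod_cast h6.le
      have h5 : ((n:ℝ))^2 ≤ (2:ℝ)^(T+1) := by
        have h8 : ((n:ℝ))^2 ≤ ((2:ℝ)^(L+1))^2 := by nlinarith
        calc ((n:ℝ))^2 ≤ ((2:ℝ)^(L+1))^2 := h8
          _ = (2:ℝ)^(T+1) := by rw [← pow_mul, hTdef]; ring_nf
      rw [h1]
      calc ENNReal.ofReal ((8*ψn)⁻¹) ≤ ENNReal.ofReal ((2:ℝ)^(T+1)) :=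
            ENNReal.ofReal_le_ofReal (by linarith)
        _ = 2^(T+1) := by rw [ENNReal.ofReal_pow (by norm_num), ENNReal.ofReal_ofNat]
    set e := MeasurableEquiv.piFinSuccAbove (fun _ : Fin (m+1) => ℝ) 0 with he
    set B := {p : ℝ × (Fin m → ℝ) | p.1 ∈ Set.Icc (0:ℝ) 1 ∧ (∀ j, p.2 j ∈ Set.Icc (0:ℝ) 1) ∧
      nint ((n:ℝ) * p.1 - γ 0) * ∏ j, nint ((n:ℝ) * p.2 j - γ (Fin.succ j)) < ψn} with hB
    have hfmeas : ∀ (a : ℝ), Measurable fun x : ℝ => nint ((n:ℝ)*x - a) :=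
      fun a => measurable_nint.comp (by fun_prop)
    have hBmeas : MeasurableSet B := by
      have hBeq : B = (Prod.fst ⁻¹' Set.Icc (0:ℝ) 1) ∩
          ((⋂ j, {p : ℝ × (Fin m → ℝ) | p.2 j ∈ Set.Icc (0:ℝ) 1}) ∩
           {p : ℝ × (Fin m → ℝ) |
             nint ((n:ℝ) * p.1 - γ 0) * ∏ j, nint ((n:ℝ) * p.2 j - γ (Fin.succ j)) < ψn}) := by
        ext p
        simp only [hB, Set.mem_setOf_eq, Set.mem_inter_iff, Set.mem_preimage, Set.mem_iInter]
      rw [hBeq]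
      refine (measurableSet_Icc.preimage measurable_fst).inter
        ((MeasurableSet.iInter fun j =>
          (measurableSet_Icc.preimage ((measurable_pi_apply j).comp measurable_snd) :
            MeasurableSet {p : ℝ × (Fin m → ℝ) | p.2 j ∈ Set.Icc (0:ℝ) 1})).inter ?_)
      exact measurableSet_lt (((hfmeas (γ 0)).comp measurable_fst).mul
        (Finset.measurable_prod _ fun j _ =>
          (hfmeas (γ j.succ)).comp ((measurable_pi_apply j).comp measurable_snd)))
        measurable_const
    have hAB : A = e ⁻¹' B := by
      ext α
      simp only [hA, hB, Set.mem_preimage, Set.mem_setOf_eq,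
        MeasurableEquiv.piFinSuccAbove_apply, Fin.zero_succAbove,
        Fin.forall_fin_succ, Fin.prod_univ_succ]
      tauto
    have hvol : volume A = volume B := by
      rw [hAB]
      exact (volume_preserving_piFinSuccAbove (fun _ : Fin (m+1) => ℝ) 0).measure_preimage
        hBmeas.nullMeasurableSet
    set φ : Fin m → ℝ → ℝ≥0∞ := fun j t => Set.indicator (Set.Icc (0:ℝ) 1)
      (fun s => min M (ENNReal.ofReal (nint ((n:ℝ)*s - γ (Fin.succ j))))⁻¹) t with hφ
    have hφmeas : ∀ j, Measurable (φ j) := fun j =>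
      (Measurable.min measurable_const ((hfmeas _).ennreal_ofReal.inv)).indicator measurableSet_Icc
    have hslice : ∀ y : Fin m → ℝ, volume ((fun x => (x, y)) ⁻¹' B) ≤ c * ∏ j, φ j (y j) := by
      intro y
      by_cases hy : ∀ j, y j ∈ Set.Icc (0:ℝ) 1
      · set P := ∏ j, nint ((n:ℝ) * y j - γ (Fin.succ j)) with hP
        have hP0 : 0 ≤ P := Finset.prod_nonneg fun j _ => nint_nonneg _
        have hsliceq : (fun x => (x, y)) ⁻¹' B =
            {x : ℝ | x ∈ Set.Icc (0:ℝ) 1 ∧ nint ((n:ℝ)*x - γ 0) * P < ψn} := by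
          ext x
          simp only [hB, Set.mem_preimage, Set.mem_setOf_eq, hP]
          tauto
        have hb1 : volume ((fun x => (x,y)) ⁻¹' B) ≤ 1 := by
          rw [hsliceq]
          refine le_trans (measure_mono (fun x hx => hx.1)) ?_
          simp [Real.volume_Icc]
        have hb2 : volume ((fun x => (x,y)) ⁻¹' B) ≤ min 1 (c / ENNReal.ofReal P) := by
          rcases eq_or_lt_of_le hP0 with hP0' | hP0'
          · rw [← hP0']
            simp only [ENNReal.ofReal_zero, ENNReal.div_zero hc0]
            simpa using hb1
          · refine le_min hb1 ?_
            rw [hsliceq]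
            refine le_trans (measure_mono ?_) (le_trans (onedim n hn (γ 0) (hγ 0) (ψn / P)) ?_)
            · rintro x ⟨hx1, hx2⟩
              exact ⟨hx1, (lt_div_iff₀ hP0').mpr hx2⟩
            · rw [show 8 * (ψn / P) = (8*ψn)/P by ring, ENNReal.ofReal_div_of_pos hP0']
        have heq : c * min M (ENNReal.ofReal P)⁻¹ = min 1 (c / ENNReal.ofReal P) := by
          rw [enn_mul_min, hMdef, ENNReal.mul_inv_cancel hc0 hct, ← div_eq_mul_inv]
        have hprod : min M (ENNReal.ofReal P)⁻¹ ≤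
            ∏ j, min M (ENNReal.ofReal (nint ((n:ℝ) * y j - γ (Fin.succ j))))⁻¹ := by
          rw [hP, ENNReal.ofReal_prod_of_nonneg (fun j _ => nint_nonneg _)]
          exact min_prod_inv_le Finset.univ _
            (fun j _ => ENNReal.ofReal_le_one.mpr (nint_le_one _)) M hM1
        calc volume ((fun x => (x,y)) ⁻¹' B) ≤ min 1 (c / ENNReal.ofReal P) := hb2
          _ = c * min M (ENNReal.ofReal P)⁻¹ := heq.symm
          _ ≤ c * ∏ j, min M (ENNReal.ofReal (nint ((n:ℝ) * y j - γ (Fin.succ j))))⁻¹ :=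
              mul_le_mul_right hprod c
          _ = c * ∏ j, φ j (y j) := by
              congr 1
              refine Finset.prod_congr rfl fun j _ => ?_
              simp only [hφ]
              rw [Set.indicator_of_mem (hy j)]
      · have hempty : (fun x => (x, y)) ⁻¹' B = ∅ := by
          ext x
          simp only [hB, Set.mem_preimage, Set.mem_setOf_eq, Set.mem_empty_iff_false, iff_false]
          tauto
        simp [hempty]
    have hlog2 : (0.6931471803:ℝ) < Real.log 2 := Real.log_two_gt_d9
    have hL2 : (L:ℝ) ≤ 2 * plog n := by
      have h2L : (2:ℝ)^L ≤ n := by exact_mod_cast Nat.pow_log_le_self 2 hn.ne'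
      have h8 : (L:ℝ) * Real.log 2 ≤ Real.log n := by
        rw [show (L:ℝ) * Real.log 2 = Real.log ((2:ℝ)^L) by rw [Real.log_pow]]
        exact Real.log_le_log (by positivity) h2L
      have hlogn : Real.log n ≤ plog n := le_max_left _ _
      nlinarith [Nat.cast_nonneg (α := ℝ) L]
    calc volume A = volume B := hvol
      _ = ∫⁻ y, volume ((fun x => (x, y)) ⁻¹' B) := by
          rw [Measure.volume_eq_prod, Measure.prod_apply_symm hBmeas]
      _ ≤ ∫⁻ y, c * ∏ j, φ j (y j) := lintegral_mono hslice
      _ = c * ∏ j, ∫⁻ t, φ j t := by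
          have hprodmeas : Measurable fun y : Fin m → ℝ => ∏ j, φ j (y j) :=
            Finset.measurable_prod _ fun j _ => (hφmeas j).comp (measurable_pi_apply j)
          rw [lintegral_const_mul c hprodmeas, lintegral_pi_prod φ hφmeas]
      _ ≤ c * ∏ _j : Fin m, ENNReal.ofReal (97 * plog n) := by
          refine mul_le_mul_right (Finset.prod_le_prod' fun j _ => ?_) c
          rw [hφ]
          rw [lintegral_indicator measurableSet_Icc]
          refine le_trans (coord_integral n hn (γ (Fin.succ j)) (hγ _) M T hMT) ?_
          have hnum : (1:ℝ≥0∞) + 16*((T:ℝ≥0∞)+1) = ((1 + 16*(T+1) : ℕ) : ℝ≥0∞) := by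
            push_cast
            ring
          rw [hnum, ← ENNReal.ofReal_natCast]
          apply ENNReal.ofReal_le_ofReal
          push_cast
          nlinarith [show (T:ℝ) = 2*L+1 by rw [hTdef]; push_cast; ring]
      _ = ENNReal.ofReal (8 * 97 ^ m * ψn * plog n ^ m) := by
          rw [Finset.prod_const, Finset.card_univ, Fintype.card_fin, hc,
            ← ENNReal.ofReal_pow (by positivity), ← ENNReal.ofReal_mul (by positivity)]
          congr 1
          ring
end
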